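/- arXiv:1411.4317 — 12 statements merged into one kernel-verified Lean document; each statement's English description precedes it below -/
import Mathlib

section
/- Let y₁, y₂ > 0 be real numbers satisfying 27·y₁⁴·y₂⁴ − 18·y₁²·y₂² + 4·y₁² + 4·y₂² < 1. Then the set {(x₁,x₂) ∈ ℝ² : C(x₁,x₂) = 0 and E(x₁,x₂) = 0} has exactly 6 elements. -/
/-- Construct a positive `c` with `c^2 * X = s`. -/
lemma mk_c (X s : ℝ) (hX : 0 < X) (hs : 0 < s) : ∃ c : ℝ, 0 < c ∧ c^2 * X = s :=
  ⟨Real.sqrt (s/X), Real.sqrt_pos.mpr (div_pos hs hX),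
    by rw [Real.sq_sqrt (div_pos hs hX).le, div_mul_cancel₀ _ (ne_of_gt hX)]⟩

/-- Injectivity of the point parametrization. -/
lemma pts_inj {c d u v : ℝ} (hc : c ≠ 0)
    (h : ((c*(u+2), -(c*(2*u+1))) : ℝ × ℝ) = (d*(v+2), -(d*(2*v+1)))) : c = d ∧ u = v := by
  injection h with h1 h2
  have hcd : c = d := by linear_combination (2/3 : ℝ)*h1 + (1/3 : ℝ)*h2
  have hcu : c*u = d*v := by linear_combination (-1/3 : ℝ)*h1 - (2/3 : ℝ)*h2
  refine ⟨hcd, ?_⟩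
  rw [← hcd] at hcu
  exact mul_left_cancel₀ hc hcu

lemma pts_ne (c d u v : ℝ) (hc : c ≠ 0) (hcontra : ¬(c = d ∧ u = v)) :
    ((c*(u+2), -(c*(2*u+1))) : ℝ × ℝ) ≠ (d*(v+2), -(d*(2*v+1))) :=
  fun h => hcontra (pts_inj hc h)

/-- Points coming from roots of the cubic solve the system. -/
lemma aux_sol (A B c u x1 x2 : ℝ) (hx1 : x1 = c*(u+2)) (hx2 : x2 = -(c*(2*u+1)))
    (hc2 : c^2*(u^2+u+1) = 1 - A - B) (hg : A*u^3+u^2+u+B = 0) :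
    x1^2 + x1 * x2 + x2^2 - 3 * (1 - A - B) = 0 ∧
    2 * x1^3 + 3 * x1^2 * x2 + 9 * x1 * A + 18 * x2 * A
      - 2 * x2^3 - 3 * x1 * x2^2 - 9 * x2 * B - 18 * x1 * B = 0 := by
  subst hx1; subst hx2
  have hX : (0:ℝ) < u^2+u+1 := by nlinarith [sq_nonneg (2*u+1)]
  constructor
  · linear_combination (3:ℝ)*hc2
  · have hE2 : (2 * (c*(u+2))^3 + 3 * (c*(u+2))^2 * (-(c*(2*u+1))) + 9 * (c*(u+2)) * A
        + 18 * (-(c*(2*u+1))) * A - 2 * (-(c*(2*u+1)))^3 - 3 * (c*(u+2)) * (-(c*(2*u+1)))^2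
        - 9 * (-(c*(2*u+1))) * B - 18 * (c*(u+2)) * B) * (u^2+u+1) = 0 := by
      linear_combination (-27*c*u*(u+1))*hc2 + (-27*c)*hg
    exact (mul_eq_zero.mp hE2).resolve_right (ne_of_gt hX)

/-- Every solution of the system comes from a root of the cubic. -/
lemma aux_conv (A B x1 x2 : ℝ) (hA : 0 < A) (hAB : A + B < 1)
    (hC : x1^2 + x1 * x2 + x2^2 - 3 * (1 - A - B) = 0)
    (hE : 2 * x1^3 + 3 * x1^2 * x2 + 9 * x1 * A + 18 * x2 * A
      - 2 * x2^3 - 3 * x1 * x2^2 - 9 * x2 * B - 18 * x1 * B = 0) :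
    ∃ t u : ℝ, x1 = t*(u+2) ∧ x2 = -(t*(2*u+1)) ∧
      t^2*(u^2+u+1) = 1 - A - B ∧ A*u^3+u^2+u+B = 0 := by
  have hL : 2*x1 + x2 ≠ 0 := by
    intro h0
    have hx2 : x2 = -(2*x1) := by linarith
    subst hx2
    have h1 : A * x1 = 0 := by linear_combination (-1/27 : ℝ) * hE
    have hx1 : x1 = 0 := by
      rcases mul_eq_zero.mp h1 with h'|h'
      · exact absurd h' (ne_of_gt hA)
      · exact h'
    rw [hx1] at hC
    have : A + B = 1 := by linear_combination (1/3 : ℝ)*hC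
    linarith
  set t := (2*x1+x2)/3 with htdef
  set u := -(x1+2*x2)/(2*x1+x2) with hudef
  have ht : t ≠ 0 := by
    rw [htdef]
    exact div_ne_zero hL (by norm_num)
  have hx1e : x1 = t*(u+2) := by
    rw [htdef, hudef, div_add' _ _ _ hL, div_mul_div_comm, eq_div_iff (mul_ne_zero (by norm_num) hL)]
    ring
  have hx2e : x2 = -(t*(2*u+1)) := by
    rw [htdef, hudef]
    field_simp
    ring
  rw [hx1e, hx2e] at hC hE
  have hct : t^2*(u^2+u+1) = 1 - A - B := by linear_combination (1/3 : ℝ)*hC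
  have h5 : t*(t^2*(u*(u+1)) + (A*u+B)) = 0 := by linear_combination (-1/27 : ℝ)*hE
  have h6 : t^2*(u*(u+1)) + (A*u+B) = 0 := (mul_eq_zero.mp h5).resolve_left ht
  exact ⟨t, u, hx1e, hx2e, hct, by linear_combination (u^2+u+1)*h6 - (u*(u+1))*hct⟩

/-- In the inner light zone the cubic `A u³ + u² + u + B` has exactly three real roots. -/
lemma aux_roots (A B : ℝ) (hA : 0 < A) (hB : 0 < B)
    (hz : 27*A^2*B^2 - 18*A*B + 4*A + 4*B < 1) :
    ∃ r1 r2 r3 : ℝ, r1 ≠ r2 ∧ r1 ≠ r3 ∧ r2 ≠ r3 ∧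
      ∀ u : ℝ, (A*u^3+u^2+u+B = 0 ↔ (u = r1 ∨ u = r2 ∨ u = r3)) := by
  have h2A : (2*A) ≠ 0 := by positivity
  -- first root by IVT
  obtain ⟨r, _, hgr⟩ : ∃ r ∈ Set.Icc (-((B+2)/A) - 1) 0, A*r^3+r^2+r+B = 0 := by
    have hu0le : -((B+2)/A) - 1 ≤ -1 := by
      have := div_pos (show (0:ℝ) < B+2 by linarith) hA
      linarith
    have hle : -((B+2)/A) - 1 ≤ 0 := by linarith
    have hcont : ContinuousOn (fun x : ℝ => A*x^3+x^2+x+B) (Set.Icc (-((B+2)/A) - 1) 0) := by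
      fun_prop
    have hAu0 : A * (-((B+2)/A) - 1) = -(B+2) - A := by
      field_simp
    have hsq : 1 ≤ (-((B+2)/A) - 1)^2 := by nlinarith [hu0le]
    have hcube : A * (-((B+2)/A) - 1)^3 = (-(B+2) - A) * (-((B+2)/A) - 1)^2 := by
      nlinarith [hAu0, sq_nonneg (-((B+2)/A) - 1)]
    have hfu0 : A*(-((B+2)/A) - 1)^3+(-((B+2)/A) - 1)^2+(-((B+2)/A) - 1)+B ≤ 0 := by
      nlinarith [hcube, hsq, mul_le_mul_of_nonneg_left hsq (show (0:ℝ) ≤ B+1+A by linarith)]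
    have hf0 : (0:ℝ) ≤ A*0^3+0^2+0+B := by nlinarith
    have := intermediate_value_Icc hle hcont
    have hmem : (0:ℝ) ∈ Set.Icc (A*(-((B+2)/A) - 1)^3+(-((B+2)/A) - 1)^2+(-((B+2)/A) - 1)+B)
        (A*(0:ℝ)^3+0^2+0+B) := ⟨hfu0, hf0⟩
    obtain ⟨r, hrmem, hr0⟩ := this hmem
    exact ⟨r, hrmem, hr0⟩
  have hBr : B = -(A*r^3+r^2+r) := by linarith
  have hq2 : ((1+A*r)^2 - 4*A*(1+r+A*r^2)) * (3*A*r^2+2*r+1)^2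
      = 1 - (27*A^2*B^2 - 18*A*B + 4*A + 4*B) := by
    rw [hBr]; ring
  have hD : 0 < (1+A*r)^2 - 4*A*(1+r+A*r^2) := by
    by_contra hcon
    push_neg at hcon
    nlinarith [hq2, hz, sq_nonneg (3*A*r^2+2*r+1),
      mul_nonneg (neg_nonneg.mpr hcon) (sq_nonneg (3*A*r^2+2*r+1))]
  have hq : (3*A*r^2+2*r+1) ≠ 0 := by
    intro h0
    rw [h0] at hq2
    norm_num at hq2
    linarith
  set sD := Real.sqrt ((1+A*r)^2 - 4*A*(1+r+A*r^2)) with hsDdef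
  have hsD2 : sD^2 = (1+A*r)^2 - 4*A*(1+r+A*r^2) := Real.sq_sqrt hD.le
  have hsDpos : 0 < sD := Real.sqrt_pos.mpr hD
  have hkey : ∀ v : ℝ, 4*A^2*(A*v^3+v^2+v+B)
      = A*(v-r)*((2*A*v+(1+A*r)) - sD)*((2*A*v+(1+A*r)) + sD) := by
    intro v
    linear_combination (A*(v-r))*hsD2 + (4*A^2)*hBr
  refine ⟨r, (sD - (1+A*r))/(2*A), (-sD - (1+A*r))/(2*A), ?_, ?_, ?_, ?_⟩
  · intro he
    rw [eq_div_iff h2A] at he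
    have he2 : sD = 2*A*r + (1+A*r) := by linarith
    have h40 : 4*A*(3*A*r^2+2*r+1) = 0 := by
      linear_combination hsD2 - (sD + (2*A*r + (1+A*r)))*he2
    have := (mul_eq_zero.mp h40).resolve_left (by positivity : (4*A) ≠ 0)
    exact hq this
  · intro he
    rw [eq_div_iff h2A] at he
    have he2 : sD = -(2*A*r + (1+A*r)) := by linarith
    have h40 : 4*A*(3*A*r^2+2*r+1) = 0 := by
      linear_combination hsD2 - (sD - (2*A*r + (1+A*r)))*he2
    have := (mul_eq_zero.mp h40).resolve_left (by positivity : (4*A) ≠ 0)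
    exact hq this
  · intro he
    have h' := congrArg (fun x => x * (2*A)) he
    simp only [div_mul_cancel₀ _ h2A] at h'
    linarith
  · intro u
    constructor
    · intro hgu
      have hfac : A*(u-r)*((2*A*u+(1+A*r)) - sD)*((2*A*u+(1+A*r)) + sD) = 0 := by
        rw [← hkey u]
        linear_combination (4*A^2)*hgu
      rcases mul_eq_zero.mp hfac with h'|h3
      · rcases mul_eq_zero.mp h' with h''|h2
        · rcases mul_eq_zero.mp h'' with hA0|h1
          · exact absurd hA0 (by positivity)
          · left; linarith
        · right; left
          rw [eq_div_iff h2A]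
          linarith
      · right; right
        rw [eq_div_iff h2A]
        linarith
    · rintro (he|he|he)
      · rw [he]; exact hgr
      · subst he
        have hmid : 2*A*((sD - (1+A*r))/(2*A))+(1+A*r) - sD = 0 := by
          field_simp
          ring
        have h0 := hkey ((sD - (1+A*r))/(2*A))
        rw [hmid] at h0
        simp only [mul_zero, zero_mul] at h0
        exact (mul_eq_zero.mp h0).resolve_left (by positivity : (4*A^2) ≠ 0)
      · subst he
        have hmid : 2*A*((-sD - (1+A*r))/(2*A))+(1+A*r) + sD = 0 := by
          field_simp
          ring
        have h0 := hkey ((-sD - (1+A*r))/(2*A))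
        rw [hmid] at h0
        simp only [mul_zero, zero_mul] at h0
        exact (mul_eq_zero.mp h0).resolve_left (by positivity : (4*A^2) ≠ 0)

/-- In the inner light zone 𝖫₁, the fiber
`{(x₁,x₂) : C(x₁,x₂) = 0 ∧ E(x₁,x₂) = 0}` has exactly 6 elements. -/
theorem stmt_0 (y₁ y₂ : ℝ) (hy₁ : 0 < y₁) (hy₂ : 0 < y₂)
    (h : 27 * y₁^4 * y₂^4 - 18 * y₁^2 * y₂^2 + 4 * y₁^2 + 4 * y₂^2 < 1) :
    ({p : ℝ × ℝ |
        p.1^2 + p.1 * p.2 + p.2^2 - 3 * (1 - y₁^2 - y₂^2) = 0 ∧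
        2 * p.1^3 + 3 * p.1^2 * p.2 + 9 * p.1 * y₁^2 + 18 * p.2 * y₁^2
          - 2 * p.2^3 - 3 * p.1 * p.2^2 - 9 * p.2 * y₂^2 - 18 * p.1 * y₂^2 = 0}).ncard
      = 6 := by
  have hA : 0 < y₁^2 := by positivity
  have hB : 0 < y₂^2 := by positivity
  have hz : 27*(y₁^2)^2*(y₂^2)^2 - 18*(y₁^2)*(y₂^2) + 4*(y₁^2) + 4*(y₂^2) < 1 := by
    nlinarith [h]
  have hsum : y₁^2 + y₂^2 < 1 := by
    nlinarith [h, sq_nonneg (1 - 3*y₁^2*y₂^2)]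
  have hs : 0 < 1 - y₁^2 - y₂^2 := by linarith
  obtain ⟨r1, r2, r3, h12, h13, h23, hiff⟩ := aux_roots (y₁^2) (y₂^2) hA hB hz
  have hX1 : (0:ℝ) < r1^2+r1+1 := by nlinarith [sq_nonneg (2*r1+1)]
  have hX2 : (0:ℝ) < r2^2+r2+1 := by nlinarith [sq_nonneg (2*r2+1)]
  have hX3 : (0:ℝ) < r3^2+r3+1 := by nlinarith [sq_nonneg (2*r3+1)]
  obtain ⟨c1, hc1pos, hc1⟩ := mk_c _ _ hX1 hs
  obtain ⟨c2, hc2pos, hc2⟩ := mk_c _ _ hX2 hs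
  obtain ⟨c3, hc3pos, hc3⟩ := mk_c _ _ hX3 hs
  have hc1ne : c1 ≠ 0 := ne_of_gt hc1pos
  have hc2ne : c2 ≠ 0 := ne_of_gt hc2pos
  have hc3ne : c3 ≠ 0 := ne_of_gt hc3pos
  have hg1 : y₁^2*r1^3+r1^2+r1+y₂^2 = 0 := (hiff r1).mpr (Or.inl rfl)
  have hg2 : y₁^2*r2^3+r2^2+r2+y₂^2 = 0 := (hiff r2).mpr (Or.inr (Or.inl rfl))
  have hg3 : y₁^2*r3^3+r3^2+r3+y₂^2 = 0 := (hiff r3).mpr (Or.inr (Or.inr rfl))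
  have hSeq : {p : ℝ × ℝ |
        p.1^2 + p.1 * p.2 + p.2^2 - 3 * (1 - y₁^2 - y₂^2) = 0 ∧
        2 * p.1^3 + 3 * p.1^2 * p.2 + 9 * p.1 * y₁^2 + 18 * p.2 * y₁^2
          - 2 * p.2^3 - 3 * p.1 * p.2^2 - 9 * p.2 * y₂^2 - 18 * p.1 * y₂^2 = 0}
      = ({(c1*(r1+2), -(c1*(2*r1+1))), ((-c1)*(r1+2), -((-c1)*(2*r1+1))),
          (c2*(r2+2), -(c2*(2*r2+1))), ((-c2)*(r2+2), -((-c2)*(2*r2+1))),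
          (c3*(r3+2), -(c3*(2*r3+1))), ((-c3)*(r3+2), -((-c3)*(2*r3+1)))} : Set (ℝ × ℝ)) := by
    ext p
    obtain ⟨x1, x2⟩ := p
    simp only [Set.mem_setOf_eq, Set.mem_insert_iff, Set.mem_singleton_iff, Prod.mk.injEq]
    constructor
    · rintro ⟨hC, hE⟩
      obtain ⟨t, u, hx1, hx2, hct, hgu⟩ := aux_conv (y₁^2) (y₂^2) x1 x2 hA hsum hC hE
      rcases (hiff u).mp hgu with hu|hu|hu
      · rw [hu] at hct hx1 hx2
        have hprod : (t - c1)*(t + c1)*(r1^2+r1+1) = 0 := by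
          linear_combination hct - hc1
        rcases mul_eq_zero.mp ((mul_eq_zero.mp hprod).resolve_right (ne_of_gt hX1)) with h'|h'
        · have ht1 : t = c1 := by linarith
          rw [ht1] at hx1 hx2
          exact Or.inl ⟨hx1, hx2⟩
        · have ht1 : t = -c1 := by linarith
          rw [ht1] at hx1 hx2
          exact Or.inr (Or.inl ⟨hx1, hx2⟩)
      · rw [hu] at hct hx1 hx2
        have hprod : (t - c2)*(t + c2)*(r2^2+r2+1) = 0 := by
          linear_combination hct - hc2
        rcases mul_eq_zero.mp ((mul_eq_zero.mp hprod).resolve_right (ne_of_gt hX2)) with h'|h'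
        · have ht1 : t = c2 := by linarith
          rw [ht1] at hx1 hx2
          exact Or.inr (Or.inr (Or.inl ⟨hx1, hx2⟩))
        · have ht1 : t = -c2 := by linarith
          rw [ht1] at hx1 hx2
          exact Or.inr (Or.inr (Or.inr (Or.inl ⟨hx1, hx2⟩)))
      · rw [hu] at hct hx1 hx2
        have hprod : (t - c3)*(t + c3)*(r3^2+r3+1) = 0 := by
          linear_combination hct - hc3
        rcases mul_eq_zero.mp ((mul_eq_zero.mp hprod).resolve_right (ne_of_gt hX3)) with h'|h'
        · have ht1 : t = c3 := by linarith
          rw [ht1] at hx1 hx2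
          exact Or.inr (Or.inr (Or.inr (Or.inr (Or.inl ⟨hx1, hx2⟩))))
        · have ht1 : t = -c3 := by linarith
          rw [ht1] at hx1 hx2
          exact Or.inr (Or.inr (Or.inr (Or.inr (Or.inr ⟨hx1, hx2⟩))))
    · rintro (⟨h1, h2⟩|⟨h1, h2⟩|⟨h1, h2⟩|⟨h1, h2⟩|⟨h1, h2⟩|⟨h1, h2⟩)
      · exact aux_sol _ _ c1 r1 _ _ h1 h2 hc1 hg1
      · exact aux_sol _ _ (-c1) r1 _ _ h1 h2 (by rw [neg_sq]; exact hc1) hg1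
      · exact aux_sol _ _ c2 r2 _ _ h1 h2 hc2 hg2
      · exact aux_sol _ _ (-c2) r2 _ _ h1 h2 (by rw [neg_sq]; exact hc2) hg2
      · exact aux_sol _ _ c3 r3 _ _ h1 h2 hc3 hg3
      · exact aux_sol _ _ (-c3) r3 _ _ h1 h2 (by rw [neg_sq]; exact hc3) hg3
  rw [hSeq]
  have hm1 : ((c1*(r1+2), -(c1*(2*r1+1))) : ℝ × ℝ) ∉
      ({((-c1)*(r1+2), -((-c1)*(2*r1+1))),
        (c2*(r2+2), -(c2*(2*r2+1))), ((-c2)*(r2+2), -((-c2)*(2*r2+1))),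
        (c3*(r3+2), -(c3*(2*r3+1))), ((-c3)*(r3+2), -((-c3)*(2*r3+1)))} : Set (ℝ × ℝ)) := by
    simp only [Set.mem_insert_iff, Set.mem_singleton_iff]
    push_neg
    exact ⟨pts_ne _ _ _ _ hc1ne (by rintro ⟨hcd, _⟩; linarith),
           pts_ne _ _ _ _ hc1ne (by rintro ⟨_, huv⟩; exact h12 huv),
           pts_ne _ _ _ _ hc1ne (by rintro ⟨hcd, _⟩; linarith),
           pts_ne _ _ _ _ hc1ne (by rintro ⟨_, huv⟩; exact h13 huv),
           pts_ne _ _ _ _ hc1ne (by rintro ⟨hcd, _⟩; linarith)⟩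
  have hm2 : (((-c1)*(r1+2), -((-c1)*(2*r1+1))) : ℝ × ℝ) ∉
      ({(c2*(r2+2), -(c2*(2*r2+1))), ((-c2)*(r2+2), -((-c2)*(2*r2+1))),
        (c3*(r3+2), -(c3*(2*r3+1))), ((-c3)*(r3+2), -((-c3)*(2*r3+1)))} : Set (ℝ × ℝ)) := by
    simp only [Set.mem_insert_iff, Set.mem_singleton_iff]
    push_neg
    exact ⟨pts_ne _ _ _ _ (neg_ne_zero.mpr hc1ne) (by rintro ⟨hcd, _⟩; linarith),
           pts_ne _ _ _ _ (neg_ne_zero.mpr hc1ne) (by rintro ⟨_, huv⟩; exact h12 huv),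
           pts_ne _ _ _ _ (neg_ne_zero.mpr hc1ne) (by rintro ⟨hcd, _⟩; linarith),
           pts_ne _ _ _ _ (neg_ne_zero.mpr hc1ne) (by rintro ⟨_, huv⟩; exact h13 huv)⟩
  have hm3 : ((c2*(r2+2), -(c2*(2*r2+1))) : ℝ × ℝ) ∉
      ({((-c2)*(r2+2), -((-c2)*(2*r2+1))),
        (c3*(r3+2), -(c3*(2*r3+1))), ((-c3)*(r3+2), -((-c3)*(2*r3+1)))} : Set (ℝ × ℝ)) := by
    simp only [Set.mem_insert_iff, Set.mem_singleton_iff]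
    push_neg
    exact ⟨pts_ne _ _ _ _ hc2ne (by rintro ⟨hcd, _⟩; linarith),
           pts_ne _ _ _ _ hc2ne (by rintro ⟨_, huv⟩; exact h23 huv),
           pts_ne _ _ _ _ hc2ne (by rintro ⟨hcd, _⟩; linarith)⟩
  have hm4 : (((-c2)*(r2+2), -((-c2)*(2*r2+1))) : ℝ × ℝ) ∉
      ({(c3*(r3+2), -(c3*(2*r3+1))), ((-c3)*(r3+2), -((-c3)*(2*r3+1)))} : Set (ℝ × ℝ)) := by
    simp only [Set.mem_insert_iff, Set.mem_singleton_iff]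
    push_neg
    exact ⟨pts_ne _ _ _ _ (neg_ne_zero.mpr hc2ne) (by rintro ⟨hcd, _⟩; linarith),
           pts_ne _ _ _ _ (neg_ne_zero.mpr hc2ne) (by rintro ⟨_, huv⟩; exact h23 huv)⟩
  have hm5 : ((c3*(r3+2), -(c3*(2*r3+1))) : ℝ × ℝ) ∉
      ({((-c3)*(r3+2), -((-c3)*(2*r3+1)))} : Set (ℝ × ℝ)) := by
    simp only [Set.mem_singleton_iff]
    exact pts_ne _ _ _ _ hc3ne (by rintro ⟨hcd, _⟩; linarith)
  rw [Set.ncard_insert_of_notMem hm1 (Set.toFinite _),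
      Set.ncard_insert_of_notMem hm2 (Set.toFinite _),
      Set.ncard_insert_of_notMem hm3 (Set.toFinite _),
      Set.ncard_insert_of_notMem hm4 (Set.toFinite _),
      Set.ncard_insert_of_notMem hm5 (Set.toFinite _),
      Set.ncard_singleton]
end

section
/- Let y₁, y₂ > 0 be real numbers satisfying 27·y₁⁴·y₂⁴ − 18·y₁²·y₂² + 4·y₁² + 4·y₂² > 1 and y₁² + y₂² < 1. Then the set {(x₁,x₂) ∈ ℝ² : C(x₁,x₂) = 0 and E(x₁,x₂) = 0} has exactly 2 elements. -/
set_option maxHeartbeats 2000000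

/-- If the cubic `f(t) = (4r-t)(2t+r-3)^2 - 27 t (a-b)^2` has two distinct real roots,
then (by Vieta and the discriminant identity) a certain square equals
`-186624 (a-b)^2 L` where `L` is the light-zone polynomial. -/
private lemma key_disc (a b r t₁ t₂ : ℝ) (hr : r = 1 - a - b)
    (hf1 : (4*r - t₁)*(2*t₁+r-3)^2 - 27*t₁*(a-b)^2 = 0)
    (hf2 : (4*r - t₂)*(2*t₂+r-3)^2 - 27*t₂*(a-b)^2 = 0)
    (hne : t₁ ≠ t₂)
    (hL2 : 0 < 27*a^2*b^2-18*a*b+4*a+4*b-1) : a = b := by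
  have hG : -4*(t₁^2+t₁*t₂+t₂^2) + 12*(r+1)*(t₁+t₂)
      + (16*r*(r-3)-(r-3)^2-27*(a-b)^2) = 0 := by
    have h12 : (t₁-t₂) * (-4*(t₁^2+t₁*t₂+t₂^2) + 12*(r+1)*(t₁+t₂)
        + (16*r*(r-3)-(r-3)^2-27*(a-b)^2)) = (t₁-t₂) * 0 := by
      linear_combination hf1 - hf2
    exact mul_left_cancel₀ (sub_ne_zero_of_ne hne) h12
  have hc1 : 16*r*(r-3)-(r-3)^2-27*(a-b)^2
      = -4*(t₁*t₂ + t₁*(3*(r+1)-t₁-t₂) + t₂*(3*(r+1)-t₁-t₂)) := by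
    linear_combination hG
  have hc0 : 4*r*(r-3)^2 = 4*t₁*t₂*(3*(r+1)-t₁-t₂) := by
    linear_combination hf1 - t₁*hc1
  have hX' : 256*((t₁-t₂)*(t₁-(3*(r+1)-t₁-t₂))*(t₂-(3*(r+1)-t₁-t₂)))^2
      = -186624*(a-b)^2*(27*a^2*b^2-18*a*b+4*a+4*b-1) := by
    linear_combination
      (-(-72*(12*(r+1))*(-4*(t₁*t₂ + t₁*(3*(r+1)-t₁-t₂) + t₂*(3*(r+1)-t₁-t₂)))
          - 4*(12*(r+1))^3
          - 432*((4*t₁*t₂*(3*(r+1)-t₁-t₂)) + (4*r*(r-3)^2)))) * hc0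
      + (-(-72*(12*(r+1))*(4*r*(r-3)^2)
          + (12*(r+1))^2*((-4*(t₁*t₂ + t₁*(3*(r+1)-t₁-t₂) + t₂*(3*(r+1)-t₁-t₂)))
              + (16*r*(r-3)-(r-3)^2-27*(a-b)^2))
          + 16*((-4*(t₁*t₂ + t₁*(3*(r+1)-t₁-t₂) + t₂*(3*(r+1)-t₁-t₂)))^2
              + (-4*(t₁*t₂ + t₁*(3*(r+1)-t₁-t₂) + t₂*(3*(r+1)-t₁-t₂)))
                  *(16*r*(r-3)-(r-3)^2-27*(a-b)^2)
              + (16*r*(r-3)-(r-3)^2-27*(a-b)^2)^2))) * hc1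
      + (221616*b^2 - 104976*b^2*r + 944784*b^2*r^2 - 314928*b^2*r^3 - 524880*b^3 - 629856*b^3*r + 314928*b^3*r^2 - 314928*b^4 + 314928*b^4*r - 314928*b^5 - 443232*a*b + 209952*a*b*r - 1889568*a*b*r^2 + 629856*a*b*r^3 + 524880*a*b^2 + 629856*a*b^2*r - 314928*a*b^2*r^2 + 2519424*a*b^3 - 2519424*a*b^3*r + 2204496*a*b^4 + 221616*a^2 - 104976*a^2*r + 944784*a^2*r^2 - 314928*a^2*r^3 + 524880*a^2*b + 629856*a^2*b*r - 314928*a^2*b*r^2 - 4408992*a^2*b^2 + 4408992*a^2*b^2*r - 1889568*a^2*b^3 - 524880*a^3 - 629856*a^3*r + 314928*a^3*r^2 + 2519424*a^3*b - 2519424*a^3*b*r - 1889568*a^3*b^2 - 314928*a^4 + 314928*a^4*r + 2204496*a^4*b - 314928*a^5) * hr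
  obtain ⟨X, hX⟩ : ∃ X : ℝ,
      256*X^2 = -186624*(a-b)^2*(27*a^2*b^2-18*a*b+4*a+4*b-1) := ⟨_, hX'⟩
  by_contra hab'
  have habZ : 0 < (a-b)^2 := sq_pos_of_ne_zero (sub_ne_zero_of_ne hab')
  nlinarith [hX, sq_nonneg X, mul_pos habZ hL2]

private lemma aux (a b : ℝ) (ha : 0 < a) (hb : 0 < b)
    (hL : 1 < 27 * a^2 * b^2 - 18 * a * b + 4 * a + 4 * b)
    (hab : a + b < 1) :
    ({p : ℝ × ℝ |
        p.1^2 + p.1 * p.2 + p.2^2 - 3 * (1 - a - b) = 0 ∧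
        2 * p.1^3 + 3 * p.1^2 * p.2 + 9 * p.1 * a + 18 * p.2 * a
          - 2 * p.2^3 - 3 * p.1 * p.2^2 - 9 * p.2 * b - 18 * p.1 * b = 0}).ncard
      = 2 := by
  obtain ⟨r, hr⟩ : ∃ r : ℝ, r = 1 - a - b := ⟨_, rfl⟩
  rw [show (1:ℝ) - a - b = r from hr.symm]
  have hr0 : 0 < r := by rw [hr]; linarith
  have hr3 : r < 1 := by rw [hr]; linarith
  have hL' : 0 < 27*a^2*b^2 - 18*a*b + 4*a + 4*b - 1 := by linarith
  -- membership characterization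
  have hmem : ∀ x₁ x₂ : ℝ,
      (x₁^2 + x₁*x₂ + x₂^2 - 3*r = 0 ∧
       2*x₁^3 + 3*x₁^2*x₂ + 9*x₁*a + 18*x₂*a - 2*x₂^3 - 3*x₁*x₂^2 - 9*x₂*b - 18*x₁*b = 0)
      ↔ (3*(x₁+x₂)^2 + (x₁-x₂)^2 = 12*r ∧
         (x₁-x₂)*(2*(x₁+x₂)^2 + r - 3) + 9*(x₁+x₂)*(a-b) = 0) := by
    intro x₁ x₂
    constructor
    · rintro ⟨hC, hE⟩
      refine ⟨by linear_combination 4*hC, ?_⟩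
      linear_combination (2/3)*hE + (2/3)*(x₁-x₂)*hC + 3*(x₁-x₂)*hr
    · rintro ⟨h1, h2⟩
      have hC : x₁^2 + x₁*x₂ + x₂^2 - 3*r = 0 := by linear_combination (1/4)*h1
      refine ⟨hC, ?_⟩
      linear_combination (3/2)*h2 - (x₁-x₂)*hC - (9/2)*(x₁-x₂)*hr
  -- every solution gives a root of the cubic
  have hroot : ∀ x₁ x₂ : ℝ,
      3*(x₁+x₂)^2 + (x₁-x₂)^2 = 12*r →
      (x₁-x₂)*(2*(x₁+x₂)^2 + r - 3) + 9*(x₁+x₂)*(a-b) = 0 →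
      (4*r - (x₁+x₂)^2)*(2*(x₁+x₂)^2+r-3)^2 - 27*(x₁+x₂)^2*(a-b)^2 = 0 := by
    intro x₁ x₂ h1 h2
    linear_combination (-(1/3))*(2*(x₁+x₂)^2+r-3)^2 * h1
      + (1/3)*((x₁-x₂)*(2*(x₁+x₂)^2+r-3) - 9*(x₁+x₂)*(a-b)) * h2
  have hathird : a = b → r < 1/3 := by
    intro hab'
    rcases le_or_gt a (1/3) with hle | hlt
    · exfalso
      have h3 : (3*a-1)^3 ≤ 0 := Odd.pow_nonpos (by decide) (by linarith)
      have h4 : (3*a-1)^3*(a+1) ≤ 0 := mul_nonpos_iff.mpr (Or.inr ⟨h3, by linarith⟩)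
      have h5 : 27*a^2*b^2 - 18*a*b + 4*a + 4*b - 1 = (3*a-1)^3*(a+1) := by
        rw [← hab']; ring
      linarith
    · rw [hr, ← hab']; linarith
  -- existence of a solution with positive coordinate sum
  have hexist : ∃ x₁ x₂ : ℝ, (3*(x₁+x₂)^2 + (x₁-x₂)^2 = 12*r ∧
      (x₁-x₂)*(2*(x₁+x₂)^2 + r - 3) + 9*(x₁+x₂)*(a-b) = 0) ∧ 0 < x₁ + x₂ := by
    rcases eq_or_ne a b with hab' | hab'
    · refine ⟨Real.sqrt r, Real.sqrt r, ⟨?_, ?_⟩, ?_⟩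
      · have hsq : Real.sqrt r ^ 2 = r := Real.sq_sqrt hr0.le
        linear_combination 12*hsq
      · rw [hab']; ring
      · have := Real.sqrt_pos.mpr hr0; linarith
    · have habZ : 0 < (a-b)^2 := sq_pos_of_ne_zero (sub_ne_zero_of_ne hab')
      obtain ⟨t₀, ht₀, hFt⟩ :
          ∃ t₀ ∈ Set.Ioo (0:ℝ) (4*r),
            (fun t : ℝ => (4*r - t)*(2*t+r-3)^2 - 27*t*(a-b)^2) t₀ = 0 := by
        apply intermediate_value_Ioo' (by linarith : (0:ℝ) ≤ 4*r)
          (Continuous.continuousOn (by continuity))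
        constructor
        · show (4*r - 4*r)*(2*(4*r)+r-3)^2 - 27*(4*r)*(a-b)^2 < 0
          nlinarith [mul_pos hr0 habZ]
        · show 0 < (4*r - 0)*(2*0+r-3)^2 - 27*0*(a-b)^2
          nlinarith [mul_pos hr0 (sq_pos_of_ne_zero (show r-3 ≠ 0 by intro hz; linarith))]
      simp only [] at hFt
      obtain ⟨h0t, ht4r⟩ := ht₀
      have hden : 2*t₀ + r - 3 ≠ 0 := by
        intro hzero
        have : (4*r - t₀)*(2*t₀+r-3)^2 - 27*t₀*(a-b)^2 = -27*t₀*(a-b)^2 := by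
          rw [hzero]; ring
        nlinarith [mul_pos h0t habZ]
      have hs2 : Real.sqrt t₀ ^ 2 = t₀ := Real.sq_sqrt h0t.le
      have hspos : 0 < Real.sqrt t₀ := Real.sqrt_pos.mpr h0t
      obtain ⟨d, hd⟩ : ∃ d : ℝ, d * (2*t₀+r-3) = -9*(Real.sqrt t₀)*(a-b) :=
        ⟨_, div_mul_cancel₀ _ hden⟩
      have hd2 : d^2 = 3*(4*r - t₀) := by
        have h2 : (d*(2*t₀+r-3))^2 = 81*(Real.sqrt t₀)^2*(a-b)^2 := by rw [hd]; ring
        have h3 : (2*t₀+r-3)^2 ≠ 0 := pow_ne_zero _ hden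
        have h4 : d^2*(2*t₀+r-3)^2 = 3*(4*r-t₀)*(2*t₀+r-3)^2 := by
          linear_combination h2 + 81*(a-b)^2*hs2 - 3*hFt
        exact mul_right_cancel₀ h3 h4
      refine ⟨(Real.sqrt t₀ + d)/2, (Real.sqrt t₀ - d)/2, ⟨?_, ?_⟩, by linarith⟩
      · linear_combination 3*hs2 + hd2
      · linear_combination hd + 2*d*hs2
  obtain ⟨p₁, p₂, ⟨hp1, hp2⟩, hps⟩ := hexist
  have hFp := hroot p₁ p₂ hp1 hp2
  have hsetEq : ({p : ℝ × ℝ |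
        p.1^2 + p.1 * p.2 + p.2^2 - 3 * r = 0 ∧
        2 * p.1^3 + 3 * p.1^2 * p.2 + 9 * p.1 * a + 18 * p.2 * a
          - 2 * p.2^3 - 3 * p.1 * p.2^2 - 9 * p.2 * b - 18 * p.1 * b = 0})
      = {((p₁ : ℝ), (p₂ : ℝ)), (-p₁, -p₂)} := by
    ext q
    simp only [Set.mem_setOf_eq, Set.mem_insert_iff, Set.mem_singleton_iff]
    constructor
    · intro hq
      obtain ⟨hq1, hq2⟩ := (hmem q.1 q.2).mp hq
      have hFq := hroot q.1 q.2 hq1 hq2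
      rcases eq_or_ne ((q.1+q.2)^2) ((p₁+p₂)^2) with hteq | htne
      · -- same value of t : points agree up to sign
        have hss : (q.1+q.2 - (p₁+p₂))*(q.1+q.2 + (p₁+p₂)) = 0 := by
          linear_combination hteq
        rcases mul_eq_zero.mp hss with h0 | h0
        · -- q.1+q.2 = p₁+p₂
          have hseq : q.1+q.2 = p₁+p₂ := by linarith [sub_eq_zero.mp h0]
          rw [hseq] at hq2
          have hsub : (q.1 - q.2 - (p₁-p₂))*(2*(p₁+p₂)^2+r-3) = 0 := by
            linear_combination hq2 - hp2
          rcases mul_eq_zero.mp hsub with h1 | h1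
          · left
            have hde : q.1 - q.2 = p₁ - p₂ := by linarith [sub_eq_zero.mp h1]
            exact Prod.ext_iff.mpr ⟨by linarith, by linarith⟩
          · exfalso
            have h9 : 9*(p₁+p₂)*(a-b) = 0 := by
              linear_combination hp2 - (p₁-p₂)*h1
            have hab' : a = b := by
              have := mul_eq_zero.mp h9
              rcases this with h | h
              · exfalso; rcases mul_eq_zero.mp h with h' | h'
                · norm_num at h'
                · linarith
              · linarith [sub_eq_zero.mp h]
            have hr13 := hathird hab'
            linarith [sq_nonneg (p₁-p₂), hp1, h1, hr13]
        · -- q.1+q.2 = -(p₁+p₂)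
          have hseq : q.1+q.2 = -(p₁+p₂) := by linarith
          rw [hseq] at hq2
          have hsub : (q.1 - q.2 + (p₁-p₂))*(2*(p₁+p₂)^2+r-3) = 0 := by
            linear_combination hq2 + hp2
          rcases mul_eq_zero.mp hsub with h1 | h1
          · right
            have hde : q.1 - q.2 = -(p₁ - p₂) := by linarith
            exact Prod.ext_iff.mpr ⟨by simp; linarith, by simp; linarith⟩
          · exfalso
            have h9 : 9*(p₁+p₂)*(a-b) = 0 := by
              linear_combination hp2 - (p₁-p₂)*h1
            have hab' : a = b := by
              rcases mul_eq_zero.mp h9 with h | h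
              · exfalso; rcases mul_eq_zero.mp h with h' | h'
                · norm_num at h'
                · linarith
              · linarith [sub_eq_zero.mp h]
            have hr13 := hathird hab'
            linarith [sq_nonneg (p₁-p₂), hp1, h1, hr13]
      · -- two distinct roots of the cubic : impossible
        exfalso
        have hab' : a = b := key_disc a b r ((q.1+q.2)^2) ((p₁+p₂)^2) hr hFq hFp htne hL'
        -- double root case
        have hr13 := hathird hab'
        have key4 : ∀ x₁ x₂ : ℝ,
            3*(x₁+x₂)^2 + (x₁-x₂)^2 = 12*r →
            (4*r - (x₁+x₂)^2)*(2*(x₁+x₂)^2+r-3)^2 - 27*(x₁+x₂)^2*(a-b)^2 = 0 →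
            (x₁+x₂)^2 = 4*r := by
          intro x₁ x₂ h1 hF
          have hF' : (4*r - (x₁+x₂)^2)*((2*(x₁+x₂)^2+r-3)^2) = 0 := by
            rw [hab'] at hF; linear_combination hF
          rcases mul_eq_zero.mp hF' with hcase | hcase
          · linarith
          · exfalso
            have h2 : 2*(x₁+x₂)^2+r-3 = 0 := sq_eq_zero_iff.mp hcase
            linarith [sq_nonneg (x₁-x₂), h1]
        have e1 := key4 q.1 q.2 hq1 hFq
        have e2 := key4 p₁ p₂ hp1 hFp
        exact htne (by rw [e1, e2])
    · rintro (rfl | rfl)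
      · exact (hmem p₁ p₂).mpr ⟨hp1, hp2⟩
      · exact (hmem (-p₁) (-p₂)).mpr ⟨by linear_combination hp1, by linear_combination -hp2⟩
  rw [hsetEq, Set.ncard_pair]
  intro hq
  rw [Prod.ext_iff] at hq
  obtain ⟨h1, h2⟩ := hq
  simp only [] at h1 h2
  have : p₁ + p₂ = 0 := by linarith [h1, h2]
  linarith

/-- In the outer light zone 𝖫₂, the fiber has exactly 2 elements. -/
theorem stmt_1 (y₁ y₂ : ℝ) (hy₁ : 0 < y₁) (hy₂ : 0 < y₂)
    (h : 1 < 27 * y₁^4 * y₂^4 - 18 * y₁^2 * y₂^2 + 4 * y₁^2 + 4 * y₂^2)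
    (h' : y₁^2 + y₂^2 < 1) :
    ({p : ℝ × ℝ |
        p.1^2 + p.1 * p.2 + p.2^2 - 3 * (1 - y₁^2 - y₂^2) = 0 ∧
        2 * p.1^3 + 3 * p.1^2 * p.2 + 9 * p.1 * y₁^2 + 18 * p.2 * y₁^2
          - 2 * p.2^3 - 3 * p.1 * p.2^2 - 9 * p.2 * y₂^2 - 18 * p.1 * y₂^2 = 0}).ncard
      = 2 := by
  exact aux (y₁^2) (y₂^2) (by positivity) (by positivity) (by nlinarith [h]) h'
end

section
/- Let y₁, y₂ > 0 be real numbers satisfying 27·y₁⁴·y₂⁴ − 18·y₁²·y₂² + 4·y₁² + 4·y₂² = 1 and (y₁,y₂) ≠ (1/√3, 1/√3). Then the set {(x₁,x₂) ∈ ℝ² : C(x₁,x₂) = 0 and E(x₁,x₂) = 0} has exactly 4 elements. -/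
private lemma aux_sq_lt_one {t : ℝ} (h : t^2 < 1) : -1 < t ∧ t < 1 := by
  constructor <;> nlinarith [h, sq_nonneg (t+1), sq_nonneg (t-1)]

set_option maxHeartbeats 1000000 in
/-- On the interior caustic 𝖢₂, the fiber has exactly 4 elements. -/
theorem stmt_2 (y₁ y₂ : ℝ) (hy₁ : 0 < y₁) (hy₂ : 0 < y₂)
    (h : 27 * y₁^4 * y₂^4 - 18 * y₁^2 * y₂^2 + 4 * y₁^2 + 4 * y₂^2 = 1)
    (hne : ((y₁, y₂) : ℝ × ℝ) ≠ (1 / Real.sqrt 3, 1 / Real.sqrt 3)) :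
    ({p : ℝ × ℝ |
        p.1^2 + p.1 * p.2 + p.2^2 - 3 * (1 - y₁^2 - y₂^2) = 0 ∧
        2 * p.1^3 + 3 * p.1^2 * p.2 + 9 * p.1 * y₁^2 + 18 * p.2 * y₁^2
          - 2 * p.2^3 - 3 * p.1 * p.2^2 - 9 * p.2 * y₂^2 - 18 * p.1 * y₂^2 = 0}).ncard
      = 4 := by
  have hb0 : 0 < y₂^2 := pow_pos hy₂ 2
  have ha0 : 0 < y₁^2 := pow_pos hy₁ 2
  have key : (54*y₂^2*y₂^2*y₁^2 - 18*y₂^2 + 4)^2 = 16*(1-3*y₂^2)^3 := by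
    linear_combination (108*y₂^2*y₂^2) * h
  have h13 : 0 ≤ 1 - 3*y₂^2 := by
    have h1 : 0 ≤ (1-3*y₂^2)^3 := by
      have h2 := sq_nonneg (54*y₂^2*y₂^2*y₁^2 - 18*y₂^2 + 4)
      rw [key] at h2
      linarith only [h2]
    exact (Odd.pow_nonneg_iff (by decide)).mp h1
  obtain ⟨t, ht2, ht3⟩ : ∃ t : ℝ, t^2 = 1 - 3*y₂^2 ∧
      6*(1-t^2)^2*y₁^2 = 2*(1-t)^2*(1+2*t) := by
    set u := Real.sqrt (1 - 3*y₂^2) with hu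
    have hu2 : u^2 = 1 - 3*y₂^2 := Real.sq_sqrt h13
    have hfac : (54*y₂^2*y₂^2*y₁^2 - 18*y₂^2 + 4 - 4*u^3) *
        (54*y₂^2*y₂^2*y₁^2 - 18*y₂^2 + 4 + 4*u^3) = 0 := by
      linear_combination key + (-16*u^4 - 16*u^2*(1-3*y₂^2) - 16*(1-3*y₂^2)^2) * hu2
    rcases mul_eq_zero.mp hfac with h1 | h1
    · exact ⟨u, hu2, by linear_combination h1 + (6 - 6*y₁^2*(1-u^2+3*y₂^2)) * hu2⟩
    · refine ⟨-u, by simpa using hu2, ?_⟩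
      linear_combination h1 + (6 - 6*y₁^2*(1-u^2+3*y₂^2)) * hu2
  have hb3 : 3*y₂^2 = 1 - t^2 := by linarith only [ht2]
  have ht1 : t^2 < 1 := by linarith only [ht2, hb0]
  obtain ⟨htm, htp⟩ := aux_sq_lt_one ht1
  have h1t : (0:ℝ) < 1 + t := by linarith only [htm]
  have h1t' : (0:ℝ) < 1 - t := by linarith only [htp]
  have hp2 : (0:ℝ) < (1+t)^2 := by
    have := mul_pos h1t h1t
    linarith only [this]
  have hp3 : (0:ℝ) < 3*(1+t)^2 := by linarith only [hp2]
  have ha' : 3*(1+t)^2*y₁^2 = 1+2*t := by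
    have h2 : (1-t)^2 * (3*(1+t)^2*y₁^2 - (1+2*t)) = 0 := by
      linear_combination (1/2) * ht3
    rcases mul_eq_zero.mp h2 with h3 | h3
    · exact absurd h3 (pow_ne_zero 2 (ne_of_gt h1t'))
    · linarith only [h3]
  have h12t : (0:ℝ) < 1 + 2*t := by
    have h4 := mul_pos hp3 ha0
    have h5 : 3*(1+t)^2*y₁^2 = 3*(1+t)^2*y₁^2 := rfl
    nlinarith [h4, ha']
  have ht0 : t ≠ 0 := by
    intro h0
    apply hne
    subst h0
    have hs3 : (0:ℝ) < Real.sqrt 3 := Real.sqrt_pos.mpr (by norm_num)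
    have hs3' : (0:ℝ) < 1/Real.sqrt 3 := one_div_pos.mpr hs3
    have e : (1/Real.sqrt 3)^2 = 1/3 := by
      rw [div_pow, one_pow, Real.sq_sqrt (by norm_num : (0:ℝ) ≤ 3)]
    have e1 : y₁ = 1/Real.sqrt 3 := by
      have hz : (y₁ - 1/Real.sqrt 3) * (y₁ + 1/Real.sqrt 3) = 0 := by
        linear_combination (1/3) * ha' - e
      rcases mul_eq_zero.mp hz with hz | hz
      · linarith only [hz]
      · linarith only [hz, hy₁, hs3']
    have e2 : y₂ = 1/Real.sqrt 3 := by
      have hz : (y₂ - 1/Real.sqrt 3) * (y₂ + 1/Real.sqrt 3) = 0 := by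
        linear_combination (1/3) * hb3 - e
      rcases mul_eq_zero.mp hz with hz | hz
      · linarith only [hz]
      · linarith only [hz, hy₂, hs3']
    rw [Prod.mk.injEq]
    exact ⟨e1, e2⟩
  -- setup of the four points
  have hs3p : (0:ℝ) < Real.sqrt 3 := Real.sqrt_pos.mpr (by norm_num)
  have hs3 : (Real.sqrt 3)^2 = 3 := Real.sq_sqrt (by norm_num)
  obtain ⟨d, hdd⟩ : ∃ x : ℝ, x = Real.sqrt 3 * (1+t) := ⟨_, rfl⟩
  have hdp : 0 < d := by rw [hdd]; exact mul_pos hs3p h1t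
  have hdne : d ≠ 0 := ne_of_gt hdp
  have hdi : d * d⁻¹ = 1 := mul_inv_cancel₀ hdne
  have hd2 : d^2 = 3*(1+t)^2 := by rw [hdd, mul_pow, hs3]
  have hcpos : (0:ℝ) < 1+t+t^2 := by nlinarith [sq_nonneg t, sq_nonneg (1+t)]
  obtain ⟨c, hcc⟩ : ∃ x : ℝ, x = Real.sqrt (1+t+t^2) := ⟨_, rfl⟩
  have hcp : 0 < c := by rw [hcc]; exact Real.sqrt_pos.mpr hcpos
  have hc2 : c^2 = 1+t+t^2 := by rw [hcc]; exact Real.sq_sqrt (le_of_lt hcpos)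
  obtain ⟨A1, hA1⟩ : ∃ x : ℝ, x = c*(1-t)/d := ⟨_, rfl⟩
  obtain ⟨A2, hA2⟩ : ∃ x : ℝ, x = c*(1+2*t)/d := ⟨_, rfl⟩
  obtain ⟨B1, hB1⟩ : ∃ x : ℝ, x = (t^2+4*t+1)/d := ⟨_, rfl⟩
  obtain ⟨B2, hB2⟩ : ∃ x : ℝ, x = (1-2*t-2*t^2)/d := ⟨_, rfl⟩
  have hy1' : y₁^2 = (1+2*t)/(3*(1+t)^2) := by
    rw [eq_div_iff (ne_of_gt hp3)]
    linarith only [ha']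
  have hy2' : y₂^2 = (1-t^2)/3 := by linarith only [hb3]
  have hset : {p : ℝ × ℝ |
        p.1^2 + p.1 * p.2 + p.2^2 - 3 * (1 - y₁^2 - y₂^2) = 0 ∧
        2 * p.1^3 + 3 * p.1^2 * p.2 + 9 * p.1 * y₁^2 + 18 * p.2 * y₁^2
          - 2 * p.2^3 - 3 * p.1 * p.2^2 - 9 * p.2 * y₂^2 - 18 * p.1 * y₂^2 = 0}
      = {(A1, A2), (-A1, -A2), (B1, B2), (-B1, -B2)} := by
    ext ⟨x1, x2⟩
    simp only [Set.mem_setOf_eq, Set.mem_insert_iff, Set.mem_singleton_iff, Prod.mk.injEq]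
    constructor
    · rintro ⟨hC, hE⟩
      have hL : (6*x1^2 + 24*y₁^2 - 3*y₂^2 - 6)*x2
          + (3*x1^3 + 12*x1*y₁^2 - 15*x1*y₂^2 - 3*x1) = 0 := by
        linear_combination hE + (2*x2+x1)*hC
      have hC3 : (1+t)^2*(x1^2+x1*x2+x2^2-3) + (1+2*t) + (1+t)^2*(1-t^2) = 0 := by
        linear_combination (1+t)^2*hC - ha' - (1+t)^2*hb3
      have hL3 : (6*(1+t)^2*(x1^2-1) + 8*(1+2*t) - (1-t^2)*(1+t)^2)*x2
          + (3*(1+t)^2*x1*(x1^2-1) + 4*x1*(1+2*t) - 5*x1*(1-t^2)*(1+t)^2) = 0 := by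
        linear_combination (1+t)^2*hL - (8*x2+4*x1)*ha' + (x2+5*x1)*(1+t)^2*hb3
      have hT : (3*(1+t)^2*x1^2 - (1-t)^2*(1+t+t^2))^2
          * (3*(1+t)^2*x1^2 - (t^2+4*t+1)^2) = 0 := by
        linear_combination
          ((1+t)^2*((3*(1+t)^2*x1*(x1^2-1) + 4*x1*(1+2*t) - 5*x1*(1-t^2)*(1+t)^2)
            - x1*(6*(1+t)^2*(x1^2-1) + 8*(1+2*t) - (1-t^2)*(1+t)^2)
            - x2*(6*(1+t)^2*(x1^2-1) + 8*(1+2*t) - (1-t^2)*(1+t)^2))) * hL3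
          + (6*(1+t)^2*(x1^2-1) + 8*(1+2*t) - (1-t^2)*(1+t)^2)^2 * hC3
      rcases mul_eq_zero.mp hT with h6 | h6
      · -- x1² = r case
        have h7 : 3*(1+t)^2*x1^2 = (1-t)^2*(1+t+t^2) := by
          have h8 := pow_eq_zero_iff (by norm_num : (2:ℕ) ≠ 0) |>.mp h6
          linarith only [h8]
        have hA1sq : x1^2 = A1^2 := by
          rw [hA1, div_pow, mul_pow, hc2, hd2, eq_div_iff (ne_of_gt hp3)]
          linear_combination h7
        have hx1 : x1 = A1 ∨ x1 = -A1 := by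
          have hz : (x1 - A1) * (x1 + A1) = 0 := by linear_combination hA1sq
          rcases mul_eq_zero.mp hz with hz | hz
          · left; linarith only [hz]
          · right; linarith only [hz]
        have h8 : (3*(1+t)^2*(1-t)) * ((1-t)*x2 - (1+2*t)*x1) = 0 := by
          linear_combination hL3 - (2*x2+x1)*h7
        have hx2eq : (1-t)*x2 = (1+2*t)*x1 := by
          rcases mul_eq_zero.mp h8 with hz | hz
          · exfalso
            have hp : (0:ℝ) < 3*(1+t)^2*(1-t) := mul_pos hp3 h1t'
            exact (ne_of_gt hp) hz
          · linarith only [hz]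
        rcases hx1 with hx1 | hx1
        · left
          refine ⟨hx1, ?_⟩
          have hw : (1-t)*x2 = (1-t)*A2 := by
            rw [hx2eq, hx1, hA1, hA2]; ring
          exact mul_left_cancel₀ (ne_of_gt h1t') hw
        · right; left
          refine ⟨hx1, ?_⟩
          have hw : (1-t)*x2 = (1-t)*(-A2) := by
            rw [hx2eq, hx1, hA1, hA2]; ring
          exact mul_left_cancel₀ (ne_of_gt h1t') hw
      · -- x1² = s case
        have h7 : 3*(1+t)^2*x1^2 = (t^2+4*t+1)^2 := by linarith only [h6]
        by_cases hq : t^2+4*t+1 = 0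
        · -- degenerate point: x1 = 0
          have hx10 : x1 = 0 := by
            have h9 : x1^2 = 0 := by
              have h10 : 3*(1+t)^2*x1^2 = 0 := by rw [h7, hq]; ring
              rcases mul_eq_zero.mp h10 with h11 | h11
              · exact absurd h11 (ne_of_gt hp3)
              · exact h11
            exact pow_eq_zero_iff (by norm_num : (2:ℕ) ≠ 0) |>.mp h9
          have hB10 : B1 = 0 := by rw [hB1, hq]; simp
          have hx2sq : 3*(1+t)^2*x2^2 = (1-2*t-2*t^2)^2 := by
            rw [hx10] at hC3
            linear_combination 3*hC3 + (2+2*t-t^2)*hq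
          have hB2sq : x2^2 = B2^2 := by
            rw [hB2, div_pow, hd2, eq_div_iff (ne_of_gt hp3)]
            linear_combination hx2sq
          have hx2 : x2 = B2 ∨ x2 = -B2 := by
            have hz : (x2 - B2) * (x2 + B2) = 0 := by linear_combination hB2sq
            rcases mul_eq_zero.mp hz with hz | hz
            · left; linarith only [hz]
            · right; linarith only [hz]
          rcases hx2 with hx2 | hx2
          · right; right; left; exact ⟨by rw [hx10, hB10], hx2⟩
          · right; right; right
            exact ⟨by rw [hx10, hB10]; ring, by rw [hx2]⟩
        · have hB1sq : x1^2 = B1^2 := by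
            rw [hB1, div_pow, hd2, eq_div_iff (ne_of_gt hp3)]
            linear_combination h7
          have hx1 : x1 = B1 ∨ x1 = -B1 := by
            have hz : (x1 - B1) * (x1 + B1) = 0 := by linear_combination hB1sq
            rcases mul_eq_zero.mp hz with hz | hz
            · left; linarith only [hz]
            · right; linarith only [hz]
          have h8 : (3*(1+t)^2*(t^2+4*t+1)) * ((t^2+4*t+1)*x2 - (1-2*t-2*t^2)*x1) = 0 := by
            linear_combination (t^2+4*t+1)*hL3 - (2*x2+x1)*(t^2+4*t+1)*h7
          have hx2eq : (t^2+4*t+1)*x2 = (1-2*t-2*t^2)*x1 := by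
            rcases mul_eq_zero.mp h8 with hz | hz
            · exfalso
              rcases mul_eq_zero.mp hz with hz' | hz'
              · exact (ne_of_gt hp3) hz'
              · exact hq hz'
            · linarith only [hz]
          rcases hx1 with hx1 | hx1
          · right; right; left
            refine ⟨hx1, ?_⟩
            have hw : (t^2+4*t+1)*x2 = (t^2+4*t+1)*B2 := by
              rw [hx2eq, hx1, hB1, hB2]; ring
            exact mul_left_cancel₀ hq hw
          · right; right; right
            refine ⟨hx1, ?_⟩
            have hw : (t^2+4*t+1)*x2 = (t^2+4*t+1)*(-B2) := by
              rw [hx2eq, hx1, hB1, hB2]; ring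
            exact mul_left_cancel₀ hq hw
    · intro hmem
      rcases hmem with ⟨e1, e2⟩ | ⟨e1, e2⟩ | ⟨e1, e2⟩ | ⟨e1, e2⟩ <;> subst e1 <;> subst e2 <;>
          simp only [hA1, hA2, hB1, hB2] <;> constructor
      · linear_combination ((2) + t^2 + (-3)*y₁^2 + (2)*d*d⁻¹ + d*t^2*d⁻¹ + (-3)*d*y₁^2*d⁻¹) * hdi
          + ((3)*d⁻¹^2 + (3)*t*d⁻¹^2 + (3)*t^2*d⁻¹^2) * hc2
          + ((-2)*d⁻¹^2 + (-1)*t^2*d⁻¹^2 + (3)*y₁^2*d⁻¹^2) * hd2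
          + ((3)*d⁻¹^2) * ha' + hb3
      · linear_combination ((9)*c*d⁻¹ + (-9)*c*t^2*d⁻¹ + (-27)*c*y₁^2*d⁻¹ + (-27)*c*y₁^2*t*d⁻¹ + (9)*c*d*d⁻¹^2 + (-9)*c*d*t^2*d⁻¹^2 + (-27)*c*d*y₁^2*d⁻¹^2 + (-27)*c*d*y₁^2*t*d⁻¹^2) * hdi
          + ((-27)*c*t*d⁻¹^3 + (-27)*c*t^2*d⁻¹^3) * hc2
          + ((-9)*c*d⁻¹^3 + (9)*c*t^2*d⁻¹^3 + (27)*c*y₁^2*d⁻¹^3 + (27)*c*y₁^2*t*d⁻¹^3) * hd2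
          + ((27)*c*d⁻¹^3 + (27)*c*t*d⁻¹^3) * ha' + ((-9)*c*d⁻¹) * hb3
      · linear_combination ((2) + t^2 + (-3)*y₁^2 + (2)*d*d⁻¹ + d*t^2*d⁻¹ + (-3)*d*y₁^2*d⁻¹) * hdi
          + ((3)*d⁻¹^2 + (3)*t*d⁻¹^2 + (3)*t^2*d⁻¹^2) * hc2
          + ((-2)*d⁻¹^2 + (-1)*t^2*d⁻¹^2 + (3)*y₁^2*d⁻¹^2) * hd2
          + ((3)*d⁻¹^2) * ha' + hb3
      · linear_combination (-1) * (((9)*c*d⁻¹ + (-9)*c*t^2*d⁻¹ + (-27)*c*y₁^2*d⁻¹ + (-27)*c*y₁^2*t*d⁻¹ + (9)*c*d*d⁻¹^2 + (-9)*c*d*t^2*d⁻¹^2 + (-27)*c*d*y₁^2*d⁻¹^2 + (-27)*c*d*y₁^2*t*d⁻¹^2) * hdi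
          + ((-27)*c*t*d⁻¹^3 + (-27)*c*t^2*d⁻¹^3) * hc2
          + ((-9)*c*d⁻¹^3 + (9)*c*t^2*d⁻¹^3 + (27)*c*y₁^2*d⁻¹^3 + (27)*c*y₁^2*t*d⁻¹^3) * hd2
          + ((27)*c*d⁻¹^3 + (27)*c*t*d⁻¹^3) * ha' + ((-9)*c*d⁻¹) * hb3)
      · linear_combination ((2) + t^2 + (-3)*y₁^2 + (2)*d*d⁻¹ + d*t^2*d⁻¹ + (-3)*d*y₁^2*d⁻¹) * hdi
          + ((-2)*d⁻¹^2 + (-1)*t^2*d⁻¹^2 + (3)*y₁^2*d⁻¹^2) * hd2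
          + ((3)*d⁻¹^2) * ha' + hb3
      · linear_combination ((9)*d⁻¹ + (18)*t*d⁻¹ + (-9)*t^2*d⁻¹ + (-18)*t^3*d⁻¹ + (-27)*y₁^2*d⁻¹ + (27)*y₁^2*t^2*d⁻¹ + (9)*d*d⁻¹^2 + (18)*d*t*d⁻¹^2 + (-9)*d*t^2*d⁻¹^2 + (-18)*d*t^3*d⁻¹^2 + (-27)*d*y₁^2*d⁻¹^2 + (27)*d*y₁^2*t^2*d⁻¹^2) * hdi
          + ((-9)*d⁻¹^3 + (-18)*t*d⁻¹^3 + (9)*t^2*d⁻¹^3 + (18)*t^3*d⁻¹^3 + (27)*y₁^2*d⁻¹^3 + (-27)*y₁^2*t^2*d⁻¹^3) * hd2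
          + ((27)*d⁻¹^3 + (-27)*t^2*d⁻¹^3) * ha' + ((-9)*d⁻¹ + (-18)*t*d⁻¹) * hb3
      · linear_combination ((2) + t^2 + (-3)*y₁^2 + (2)*d*d⁻¹ + d*t^2*d⁻¹ + (-3)*d*y₁^2*d⁻¹) * hdi
          + ((-2)*d⁻¹^2 + (-1)*t^2*d⁻¹^2 + (3)*y₁^2*d⁻¹^2) * hd2
          + ((3)*d⁻¹^2) * ha' + hb3
      · linear_combination (-1) * (((9)*d⁻¹ + (18)*t*d⁻¹ + (-9)*t^2*d⁻¹ + (-18)*t^3*d⁻¹ + (-27)*y₁^2*d⁻¹ + (27)*y₁^2*t^2*d⁻¹ + (9)*d*d⁻¹^2 + (18)*d*t*d⁻¹^2 + (-9)*d*t^2*d⁻¹^2 + (-18)*d*t^3*d⁻¹^2 + (-27)*d*y₁^2*d⁻¹^2 + (27)*d*y₁^2*t^2*d⁻¹^2) * hdi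
          + ((-9)*d⁻¹^3 + (-18)*t*d⁻¹^3 + (9)*t^2*d⁻¹^3 + (18)*t^3*d⁻¹^3 + (27)*y₁^2*d⁻¹^3 + (-27)*y₁^2*t^2*d⁻¹^3) * hd2
          + ((27)*d⁻¹^3 + (-27)*t^2*d⁻¹^3) * ha' + ((-9)*d⁻¹ + (-18)*t*d⁻¹) * hb3)
  rw [hset]
  -- distinctness facts
  have hA2ne : A2 ≠ 0 := by
    have : 0 < A2 := by
      rw [hA2]
      exact div_pos (mul_pos hcp h12t) hdp
    exact ne_of_gt this
  have hABne : ∀ ε : ℝ, ε = 1 ∨ ε = -1 → A1 ≠ ε * B1 := by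
    rintro ε hε hcontra
    have h9 : A1^2 = B1^2 := by
      rcases hε with hε | hε <;> rw [hcontra, hε] <;> ring
    rw [hA1, hB1, div_pow, div_pow, mul_pow, hc2] at h9
    have h10 : (1+t+t^2)*(1-t)^2 = (t^2+4*t+1)^2 := by
      rw [div_eq_div_iff (pow_ne_zero 2 hdne) (pow_ne_zero 2 hdne)] at h9
      exact mul_right_cancel₀ (pow_ne_zero 2 hdne) h9
    have h11 : t*(1+t)^2 = 0 := by linear_combination (-1/9)*h10
    rcases mul_eq_zero.mp h11 with hz | hz
    · exact ht0 hz
    · exact (ne_of_gt hp2) hz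
  have hBne : ¬(B1 = -B1 ∧ B2 = -B2) := by
    rintro ⟨e1, e2⟩
    have hB10 : B1 = 0 := by linarith only [e1]
    have hB20 : B2 = 0 := by linarith only [e2]
    rw [hB1, div_eq_zero_iff] at hB10
    rw [hB2, div_eq_zero_iff] at hB20
    have q1 : t^2+4*t+1 = 0 := hB10.resolve_right hdne
    have q2 : 1-2*t-2*t^2 = 0 := hB20.resolve_right hdne
    linarith only [q1, q2, h12t]
  rw [Set.ncard_insert_of_notMem, Set.ncard_insert_of_notMem, Set.ncard_pair]
  · intro hcon
    rw [Prod.mk.injEq] at hcon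
    exact hBne hcon
  · simp only [Set.mem_insert_iff, Set.mem_singleton_iff, Prod.mk.injEq, not_or]
    constructor
    · rintro ⟨e1, e2⟩
      exact hABne (-1) (Or.inr rfl) (by linarith only [e1])
    · rintro ⟨e1, e2⟩
      exact hABne 1 (Or.inl rfl) (by linarith only [e1])
  · simp only [Set.mem_insert_iff, Set.mem_singleton_iff, Prod.mk.injEq, not_or]
    refine ⟨?_, ?_, ?_⟩
    · rintro ⟨e1, e2⟩
      exact hA2ne (by linarith only [e2])
    · rintro ⟨e1, e2⟩
      exact hABne 1 (Or.inl rfl) (by linarith only [e1])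
    · rintro ⟨e1, e2⟩
      exact hABne (-1) (Or.inr rfl) (by linarith only [e1])
end

section
/- Let y₁ = y₂ = 1/√3. Then the set {(x₁,x₂) ∈ ℝ² : C(x₁,x₂) = 0 and E(x₁,x₂) = 0} is exactly the two-element set {(1/√3, 1/√3), (−1/√3, −1/√3)}. -/
/-- Over the cuspidal point y₁ = y₂ = 1/√3, the fiber is exactly
`{(1/√3, 1/√3), (−1/√3, −1/√3)}`. -/
theorem stmt_3 (y₁ y₂ : ℝ) (h1 : y₁ = 1 / Real.sqrt 3) (h2 : y₂ = 1 / Real.sqrt 3) :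
    {p : ℝ × ℝ |
        p.1^2 + p.1 * p.2 + p.2^2 - 3 * (1 - y₁^2 - y₂^2) = 0 ∧
        2 * p.1^3 + 3 * p.1^2 * p.2 + 9 * p.1 * y₁^2 + 18 * p.2 * y₁^2
          - 2 * p.2^3 - 3 * p.1 * p.2^2 - 9 * p.2 * y₂^2 - 18 * p.1 * y₂^2 = 0}
      = {(1 / Real.sqrt 3, 1 / Real.sqrt 3),
         (-(1 / Real.sqrt 3), -(1 / Real.sqrt 3))} := by
  subst h1 h2
  have hs : Real.sqrt 3 ^ 2 = 3 := Real.sq_sqrt (by norm_num)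
  have hy : (1 / Real.sqrt 3) ^ 2 = 1 / 3 := by
    rw [div_pow, hs]; norm_num
  ext p
  simp only [Set.mem_setOf_eq, Set.mem_insert_iff, Set.mem_singleton_iff, Prod.ext_iff]
  rw [hy]
  constructor
  · rintro ⟨hC, hE⟩
    have heq : (p.1 - p.2) ^ 3 = 0 := by linear_combination 3 * (p.1 - p.2) * hC - hE
    have hpe : p.1 = p.2 := by
      have := pow_eq_zero_iff (n := 3) (by norm_num) |>.mp heq
      linarith
    have hsq : (p.1 - 1 / Real.sqrt 3) * (p.1 + 1 / Real.sqrt 3) = 0 := by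
      rw [← hpe] at hC
      linear_combination (1 / 3 : ℝ) * hC - hy
    rcases mul_eq_zero.mp hsq with h | h
    · left; constructor <;> [linarith; linarith [hpe ▸ h]]
    · right; constructor <;> [linarith; linarith [hpe ▸ h]]
  · rintro (⟨ha, hb⟩ | ⟨ha, hb⟩) <;> rw [ha, hb] <;>
      exact ⟨by linear_combination 3 * hy, by ring⟩
end

section
/- Let y₁, y₂ > 0 be real numbers. (i) If y₁² + y₂² > 1, then there is no (x₁,x₂) ∈ ℝ² with C(x₁,x₂) = 0 and E(x₁,x₂) = 0. (ii) If y₁² + y₂² = 1, then (x₁,x₂) = (0,0) is the unique point of ℝ² with C(x₁,x₂) = 0 and E(x₁,x₂) = 0. (iii) If y₁² + y₂² < 1, then there exist at least two distinct points (x₁,x₂) ∈ ℝ² with C(x₁,x₂) = 0 and E(x₁,x₂) = 0. -/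
/-- the shadow zone is `{y₁² + y₂² > 1}`: the fiber is empty there,
a single point `(0,0)` on the boundary circle, and has ≥ 2 points inside. -/
theorem stmt_4 (y₁ y₂ : ℝ) (hy₁ : 0 < y₁) (hy₂ : 0 < y₂) :
    (1 < y₁^2 + y₂^2 →
      ¬ ∃ p : ℝ × ℝ,
        p.1^2 + p.1 * p.2 + p.2^2 - 3 * (1 - y₁^2 - y₂^2) = 0 ∧
        2 * p.1^3 + 3 * p.1^2 * p.2 + 9 * p.1 * y₁^2 + 18 * p.2 * y₁^2
          - 2 * p.2^3 - 3 * p.1 * p.2^2 - 9 * p.2 * y₂^2 - 18 * p.1 * y₂^2 = 0) ∧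
    (y₁^2 + y₂^2 = 1 →
      {p : ℝ × ℝ |
        p.1^2 + p.1 * p.2 + p.2^2 - 3 * (1 - y₁^2 - y₂^2) = 0 ∧
        2 * p.1^3 + 3 * p.1^2 * p.2 + 9 * p.1 * y₁^2 + 18 * p.2 * y₁^2
          - 2 * p.2^3 - 3 * p.1 * p.2^2 - 9 * p.2 * y₂^2 - 18 * p.1 * y₂^2 = 0}
        = {((0 : ℝ), (0 : ℝ))}) ∧
    (y₁^2 + y₂^2 < 1 →
      ∃ p q : ℝ × ℝ, p ≠ q ∧
        (p.1^2 + p.1 * p.2 + p.2^2 - 3 * (1 - y₁^2 - y₂^2) = 0 ∧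
         2 * p.1^3 + 3 * p.1^2 * p.2 + 9 * p.1 * y₁^2 + 18 * p.2 * y₁^2
           - 2 * p.2^3 - 3 * p.1 * p.2^2 - 9 * p.2 * y₂^2 - 18 * p.1 * y₂^2 = 0) ∧
        (q.1^2 + q.1 * q.2 + q.2^2 - 3 * (1 - y₁^2 - y₂^2) = 0 ∧
         2 * q.1^3 + 3 * q.1^2 * q.2 + 9 * q.1 * y₁^2 + 18 * q.2 * y₁^2
           - 2 * q.2^3 - 3 * q.1 * q.2^2 - 9 * q.2 * y₂^2 - 18 * q.1 * y₂^2 = 0)) := by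
  refine ⟨?_, ?_, ?_⟩
  · rintro h ⟨⟨a, b⟩, hC, hE⟩
    simp only at hC hE
    nlinarith [sq_nonneg (a + b), sq_nonneg a, sq_nonneg b]
  · intro h
    ext ⟨a, b⟩
    simp only [Set.mem_setOf_eq, Set.mem_singleton_iff, Prod.mk.injEq]
    constructor
    · rintro ⟨hC, hE⟩
      constructor
      · nlinarith [sq_nonneg (2*a + b), sq_nonneg b, sq_nonneg (a + 2*b), sq_nonneg a]
      · nlinarith [sq_nonneg (2*a + b), sq_nonneg b, sq_nonneg (a + 2*b), sq_nonneg a]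
    · rintro ⟨ha, hb⟩
      subst ha; subst hb
      constructor
      · simp; linarith
      · ring
  · intro h
    set s : ℝ := 1 - y₁^2 - y₂^2 with hs
    have hs0 : 0 < s := by simp only [hs]; linarith
    set r : ℝ := Real.sqrt s with hrdef
    have hr2 : r ^ 2 = s := Real.sq_sqrt hs0.le
    have h3 : (Real.sqrt 3) ^ 2 = 3 := Real.sq_sqrt (by norm_num)
    set w : ℝ := Real.sqrt 3 with hw
    -- parametrization of the conic C = 0
    set A : ℝ → ℝ := fun θ => r * (Real.cos θ + w * Real.sin θ) with hA
    set B : ℝ → ℝ := fun θ => r * (Real.cos θ - w * Real.sin θ) with hB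
    set f : ℝ → ℝ := fun θ =>
      2 * (A θ)^3 + 3 * (A θ)^2 * (B θ) + 9 * (A θ) * y₁^2 + 18 * (B θ) * y₁^2
        - 2 * (B θ)^3 - 3 * (A θ) * (B θ)^2 - 9 * (B θ) * y₂^2 - 18 * (A θ) * y₂^2 with hf
    have hcont : ContinuousOn f (Set.uIcc 0 Real.pi) := by
      apply Continuous.continuousOn
      simp only [hf, hA, hB]
      fun_prop
    have hfpi : f Real.pi = - f 0 := by
      simp only [hf, hA, hB, Real.cos_pi, Real.sin_pi, Real.cos_zero, Real.sin_zero]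
      ring
    have hmem : (0 : ℝ) ∈ Set.uIcc (f 0) (f Real.pi) := by
      rw [hfpi, Set.mem_uIcc]
      rcases le_total (f 0) 0 with h' | h'
      · left; constructor <;> linarith
      · right; constructor <;> linarith
    obtain ⟨θ, _, hθ⟩ := intermediate_value_uIcc hcont hmem
    have hct : Real.sin θ ^ 2 + Real.cos θ ^ 2 = 1 := Real.sin_sq_add_cos_sq θ
    have hCθ : (A θ)^2 + (A θ) * (B θ) + (B θ)^2 = 3 * s := by
      simp only [hA, hB]
      linear_combination (3 * r^2) * hct + 3 * hr2 + (r^2 * Real.sin θ ^ 2) * h3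
    have hEθ : 2 * (A θ)^3 + 3 * (A θ)^2 * (B θ) + 9 * (A θ) * y₁^2 + 18 * (B θ) * y₁^2
        - 2 * (B θ)^3 - 3 * (A θ) * (B θ)^2 - 9 * (B θ) * y₂^2 - 18 * (A θ) * y₂^2 = 0 := hθ
    refine ⟨(A θ, B θ), (-(A θ), -(B θ)), ?_, ⟨?_, ?_⟩, ⟨?_, ?_⟩⟩
    · intro hc
      have h1 : A θ = 0 := by
        have := Prod.mk.injEq (A θ) (B θ) (-(A θ)) (-(B θ)) ▸ hc
        simp only [Prod.mk.injEq] at hc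
        linarith [hc.1]
      have h2 : B θ = 0 := by
        simp only [Prod.mk.injEq] at hc
        linarith [hc.2]
      rw [h1, h2] at hCθ
      nlinarith
    · simp only; linarith [hCθ]
    · exact hEθ
    · simp only; nlinarith [hCθ]
    · simp only; linarith [hEθ]
end

section
/- Let y₁, y₂ ∈ ℝ with y₁ ≥ √3/2 and y₂ ≥ √3/2. Let a = diag(y₁y₂, y₂, 1) be a 3×3 real diagonal matrix and let u be a real 3×3 upper triangular matrix with all diagonal entries equal to 1. Let γ be a 2×2 integer matrix with determinant ±1, and let γ̃ be the 3×3 block-diagonal matrix with blocks γ and 1. Suppose γ̃·u·a = u′·d·k, where u′ is a real upper triangular 3×3 matrix with unit diagonal, d = diag(d₁, d₂, d₃) with d₁, d₂, d₃ > 0, and k is a real orthogonal 3×3 matrix (kᵀk = I). Then max(d₁/d₂, d₂/d₃) ≥ (√3/2)·max(y₁, y₂). -/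
open Matrix
set_option maxHeartbeats 1000000 in
lemma aux6 (y₁ y₂ a b c d p q r p' q' r' d₁ d₂ d₃ : ℝ)
    (k : Matrix (Fin 3) (Fin 3) ℝ) (hk : kᵀ * k = 1)
    (hiwa : Matrix.of ![![a, b, 0], ![c, d, 0], ![0, 0, 1]]
        * Matrix.of ![![1, p, q], ![0, 1, r], ![0, 0, 1]]
        * Matrix.diagonal ![y₁ * y₂, y₂, 1]
      = Matrix.of ![![1, p', q'], ![0, 1, r'], ![0, 0, 1]]
        * Matrix.diagonal ![d₁, d₂, d₃] * k) :
    d₃ * d₃ = 1 ∧ d₂ ^ 2 = c ^ 2 * (y₁ * y₂) ^ 2 + (c * p + d) ^ 2 * y₂ ^ 2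
      ∧ (d₁ * d₂ * d₃) ^ 2 = ((a * d - b * c) * (y₁ * y₂ * y₂)) ^ 2 := by
  have hkk : k * kᵀ = 1 := mul_eq_one_comm.mp hk
  set L := Matrix.of ![![a, b, 0], ![c, d, 0], ![0, 0, 1]]
        * Matrix.of ![![1, p, q], ![0, 1, r], ![0, 0, 1]]
        * Matrix.diagonal ![y₁ * y₂, y₂, 1] with hL
  set R := Matrix.of ![![1, p', q'], ![0, 1, r'], ![0, 0, 1]]
        * Matrix.diagonal ![d₁, d₂, d₃] with hR
  have hG : L * Lᵀ = R * Rᵀ := by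
    rw [hiwa]
    simp only [Matrix.transpose_mul, Matrix.mul_assoc]
    rw [← Matrix.mul_assoc k kᵀ, hkk, Matrix.one_mul]
  have e22 := congrFun (congrFun hG 2) 2
  have e12 := congrFun (congrFun hG 1) 2
  have e11 := congrFun (congrFun hG 1) 1
  simp [hL, hR, Matrix.mul_apply, Fin.sum_univ_three, Matrix.transpose_apply,
    Matrix.diagonal, Matrix.vecHead, Matrix.vecTail] at e22 e12 e11
  have hd3 : d₃ * d₃ = 1 := e22.symm
  have hr' : c * q + d * r = r' := by rw [e12, mul_assoc, hd3, mul_one]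
  have hrr : r' * d₃ * (r' * d₃) = (c * q + d * r) * (c * q + d * r) := by
    rw [hr']; calc r' * d₃ * (r' * d₃) = r' * r' * (d₃ * d₃) := by ring
      _ = r' * r' := by rw [hd3, mul_one]
  -- determinants
  have hdk : k.det * k.det = 1 := by
    have := congrArg Matrix.det hk
    simpa [Matrix.det_mul, mul_comm] using this
  have hdetL : L.det = (a * d - b * c) * (y₁ * y₂ * y₂) := by
    rw [hL, Matrix.det_mul, Matrix.det_mul]
    simp [Matrix.det_fin_three, Matrix.det_diagonal, Fin.prod_univ_three,
      Matrix.vecHead, Matrix.vecTail]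
  have hdetR : R.det = d₁ * d₂ * d₃ := by
    rw [hR, Matrix.det_mul]
    simp [Matrix.det_fin_three, Matrix.det_diagonal, Fin.prod_univ_three,
      Matrix.vecHead, Matrix.vecTail]
  have hLR : L.det = R.det * k.det := by rw [hiwa, Matrix.det_mul]
  have hsq : L.det ^ 2 = R.det ^ 2 := by
    rw [hLR]; linear_combination R.det ^ 2 * hdk
  rw [hdetL, hdetR] at hsq
  exact ⟨hd3, by linear_combination - e11 - hrr, by linear_combination -hsq⟩


set_option maxHeartbeats 1000000 in
/-- reduction-theory lemma for GL₃. If `a = diag(y₁y₂, y₂, 1)` with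
`y₁, y₂ ≥ √3/2`, `u` is unit upper triangular, `γ ∈ GL₂(ℤ)` is embedded in the
upper-left block as `γ̃`, and `γ̃ u a = u' d k` is an Iwasawa decomposition
(`u'` unit upper triangular, `d = diag(d₁,d₂,d₃)` positive, `k` orthogonal), then
`max(d₁/d₂, d₂/d₃) ≥ (√3/2) · max(y₁, y₂)`. -/
theorem stmt_6 (y₁ y₂ : ℝ) (hy₁ : Real.sqrt 3 / 2 ≤ y₁) (hy₂ : Real.sqrt 3 / 2 ≤ y₂)
    (u u' : Matrix (Fin 3) (Fin 3) ℝ)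
    (hu_diag : ∀ i : Fin 3, u i i = 1)
    (hu_low : ∀ i j : Fin 3, (j : ℕ) < (i : ℕ) → u i j = 0)
    (hu'_diag : ∀ i : Fin 3, u' i i = 1)
    (hu'_low : ∀ i j : Fin 3, (j : ℕ) < (i : ℕ) → u' i j = 0)
    (γ : Matrix (Fin 2) (Fin 2) ℤ) (hγ : γ.det = 1 ∨ γ.det = -1)
    (γt : Matrix (Fin 3) (Fin 3) ℝ)
    (hγt : ∀ i j : Fin 3, γt i j =
      if hi : (i : ℕ) < 2 then
        (if hj : (j : ℕ) < 2 then ((γ ⟨(i : ℕ), hi⟩ ⟨(j : ℕ), hj⟩ : ℤ) : ℝ) else 0)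
      else (if (j : ℕ) < 2 then 0 else 1))
    (d₁ d₂ d₃ : ℝ) (hd₁ : 0 < d₁) (hd₂ : 0 < d₂) (hd₃ : 0 < d₃)
    (k : Matrix (Fin 3) (Fin 3) ℝ) (hk : kᵀ * k = 1)
    (hiwa : γt * u * Matrix.diagonal ![y₁ * y₂, y₂, 1]
      = u' * Matrix.diagonal ![d₁, d₂, d₃] * k) :
    max (d₁ / d₂) (d₂ / d₃) ≥ (Real.sqrt 3 / 2) * max y₁ y₂ := by
  have hs3 : Real.sqrt 3 ≤ 2 := by
    nlinarith [Real.sq_sqrt (by norm_num : (0:ℝ) ≤ 3), Real.sqrt_nonneg 3]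
  have h32 : (0:ℝ) < Real.sqrt 3 / 2 := by positivity
  have hy₁0 : 0 < y₁ := lt_of_lt_of_le h32 hy₁
  have hy₂0 : 0 < y₂ := lt_of_lt_of_le h32 hy₂
  have hu : u = Matrix.of ![![1, u 0 1, u 0 2], ![0, 1, u 1 2], ![0, 0, 1]] := by
    ext i j
    fin_cases i <;> fin_cases j <;>
      simp [Matrix.vecHead, Matrix.vecTail, hu_diag, hu_low 1 0 (by norm_num),
        hu_low 2 0 (by norm_num), hu_low 2 1 (by norm_num)]
  have hu'e : u' = Matrix.of ![![1, u' 0 1, u' 0 2], ![0, 1, u' 1 2], ![0, 0, 1]] := by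
    ext i j
    fin_cases i <;> fin_cases j <;>
      simp [Matrix.vecHead, Matrix.vecTail, hu'_diag, hu'_low 1 0 (by norm_num),
        hu'_low 2 0 (by norm_num), hu'_low 2 1 (by norm_num)]
  have hγteq : γt = Matrix.of ![![((γ 0 0 : ℤ) : ℝ), ((γ 0 1 : ℤ) : ℝ), 0],
      ![((γ 1 0 : ℤ) : ℝ), ((γ 1 1 : ℤ) : ℝ), 0], ![0, 0, 1]] := by
    ext i j
    fin_cases i <;> fin_cases j <;> simp [hγt]
  rw [hγteq, hu, hu'e] at hiwa
  obtain ⟨hd3, hd2, hprod⟩ := aux6 y₁ y₂ _ _ _ _ _ _ _ _ _ _ d₁ d₂ d₃ k hk hiwa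
  have hd3' : d₃ = 1 := by nlinarith
  subst hd3'
  have hdg2 : (((γ 0 0 : ℤ) : ℝ) * ((γ 1 1 : ℤ) : ℝ)
      - ((γ 0 1 : ℤ) : ℝ) * ((γ 1 0 : ℤ) : ℝ)) ^ 2 = 1 := by
    have h1 : (γ.det) ^ 2 = 1 := by rcases hγ with h | h <;> rw [h] <;> norm_num
    rw [Matrix.det_fin_two] at h1
    have h2 := congrArg (fun n : ℤ => (n : ℝ)) h1
    push_cast at h2
    convert h2 using 2
  have hprodsq : (d₁ * d₂) ^ 2 = (y₁ * y₂ * y₂) ^ 2 := by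
    linear_combination hprod + (y₁ * y₂ * y₂) ^ 2 * hdg2
  have hprod' : d₁ * d₂ = y₁ * y₂ * y₂ := by
    nlinarith [hprodsq, mul_pos hd₁ hd₂, mul_pos (mul_pos hy₁0 hy₂0) hy₂0]
  by_cases hc : γ 1 0 = 0
  · -- γ₁₁ = ±1, d₂ = y₂, d₁ = y₁y₂
    have h11 : γ 1 1 = 1 ∨ γ 1 1 = -1 := by
      have hd : γ 0 0 * γ 1 1 = 1 ∨ γ 0 0 * γ 1 1 = -1 := by
        rw [Matrix.det_fin_two, hc] at hγ; simpa using hγ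
      have hdvd : γ 1 1 ∣ 1 := by
        rcases hd with h | h
        · exact ⟨γ 0 0, by linarith⟩
        · exact ⟨-(γ 0 0), by linarith⟩
      exact Int.isUnit_iff.mp (isUnit_of_dvd_one hdvd)
    have h11sq : ((γ 1 1 : ℤ) : ℝ) ^ 2 = 1 := by
      rcases h11 with h | h <;> rw [h] <;> norm_num
    rw [hc] at hd2
    push_cast at hd2
    have hd2' : d₂ = y₂ := by
      nlinarith [hd2, h11sq, sq_nonneg (d₂ - y₂), sq_nonneg (d₂ + y₂)]
    have hd1' : d₁ = y₁ * y₂ := by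
      apply mul_right_cancel₀ (ne_of_gt hy₂0)
      rw [← hd2'] at hprod' ⊢
      linarith [hprod']
    rw [hd1', hd2', div_one]
    have : y₁ * y₂ / y₂ = y₁ := by field_simp
    rw [this]
    rcases max_cases y₁ y₂ with ⟨h, _⟩ | ⟨h, _⟩ <;> rw [h] <;> nlinarith
  · -- |γ₁₀| ≥ 1, d₂ ≥ y₁y₂
    have h10 : (1 : ℝ) ≤ ((γ 1 0 : ℤ) : ℝ) ^ 2 := by
      have : (1 : ℤ) ≤ (γ 1 0) ^ 2 := by
        rcases lt_or_gt_of_ne hc with h | h <;> nlinarith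
      exact_mod_cast this
    have hd2ge : y₁ * y₂ ≤ d₂ := by
      nlinarith [hd2, h10, sq_nonneg (((γ 1 0 : ℤ) : ℝ) * u 0 1 + ((γ 1 1 : ℤ) : ℝ)),
        mul_pos hy₁0 hy₂0]
    refine le_trans ?_ (le_max_right (d₁ / d₂) (d₂ / 1))
    rw [div_one]
    rcases max_cases y₁ y₂ with ⟨h, _⟩ | ⟨h, _⟩ <;> rw [h] <;> nlinarith
end

section
/- Let y₁² = y₂² = 1/3. Then for every t ∈ ℝ, E(t) = (1/3)·(2t² + 2t − 1)³. In particular, the polynomial E has exactly two distinct complex roots, namely (−1+√3)/2 and (−1−√3)/2, each real of multiplicity 3. -/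
open Polynomial

/-- The polynomial `E(t)` as a real-valued function. -/
def EFun (y₁ y₂ t : ℝ) : ℝ :=
  y₁^2 * (t^2 + 4*t + 1)^3 + y₂^2 * (t^2 - 2*t - 2)^3
    + 2*t^6 + 6*t^5 - 15*t^4 - 40*t^3 - 15*t^2 + 6*t + 2

/-- The polynomial `E` viewed over ℂ. -/
noncomputable def EPoly (y₁ y₂ : ℝ) : Polynomial ℂ :=
  C ((y₁ : ℂ)^2) * (X^2 + 4*X + 1)^3 + C ((y₂ : ℂ)^2) * (X^2 - 2*X - 2)^3
    + 2*X^6 + 6*X^5 - 15*X^4 - 40*X^3 - 15*X^2 + 6*X + 2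

/-- If `y₁² = y₂² = 1/3` then `E(t) = (1/3)(2t²+2t−1)³`; in particular
`E` has exactly two distinct complex roots `(−1±√3)/2`, both real, each of
multiplicity 3. -/
theorem stmt_7 (y₁ y₂ : ℝ) (h1 : y₁^2 = 1/3) (h2 : y₂^2 = 1/3) :
    (∀ t : ℝ, EFun y₁ y₂ t = (1/3) * (2*t^2 + 2*t - 1)^3) ∧
    {z : ℂ | (EPoly y₁ y₂).IsRoot z}
      = {((((-1 + Real.sqrt 3) / 2 : ℝ)) : ℂ), ((((-1 - Real.sqrt 3) / 2 : ℝ)) : ℂ)} ∧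
    (EPoly y₁ y₂).rootMultiplicity ((((-1 + Real.sqrt 3) / 2 : ℝ)) : ℂ) = 3 ∧
    (EPoly y₁ y₂).rootMultiplicity ((((-1 - Real.sqrt 3) / 2 : ℝ)) : ℂ) = 3 := by
  have hs3 : Real.sqrt 3 ^ 2 = 3 := Real.sq_sqrt (by norm_num)
  have hspos : (0:ℝ) < Real.sqrt 3 := Real.sqrt_pos.mpr (by norm_num)
  set ar : ℝ := (-1 + Real.sqrt 3) / 2 with har
  set br : ℝ := (-1 - Real.sqrt 3) / 2 with hbr
  set a : ℂ := (ar : ℂ) with ha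
  set b : ℂ := (br : ℂ) with hb
  -- complex facts about a, b
  have hsum : a + b = -1 := by
    rw [ha, hb, ← Complex.ofReal_add]
    have : ar + br = -1 := by rw [har, hbr]; ring
    rw [this]; norm_num
  have hprod : a * b * 2 = -1 := by
    rw [ha, hb, ← Complex.ofReal_mul]
    have : ar * br * 2 = -1 := by rw [har, hbr]; nlinarith [hs3]
    calc ((ar * br : ℝ) : ℂ) * 2 = ((ar * br * 2 : ℝ) : ℂ) := by push_cast; ring
      _ = -1 := by rw [this]; norm_num
  have hne : a ≠ b := by
    rw [ha, hb, Ne, Complex.ofReal_inj, har, hbr]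
    intro h; nlinarith
  -- polynomial-level constant facts
  have h1r : C a + C b = -1 := by rw [← C_add, hsum]; simp
  have h2r : C a * C b * 2 = -1 := by
    rw [show (2 : ℂ[X]) = C 2 from (map_ofNat C 2).symm, ← C_mul, ← C_mul, hprod]; simp
  have h3u : C ((1:ℂ)/3) * 3 = 1 := by
    rw [show (3 : ℂ[X]) = C 3 from (map_ofNat C 3).symm, ← C_mul]; norm_num
  -- casts of hypotheses
  have hy1 : ((y₁ : ℂ))^2 = 1/3 := by
    have := congrArg (fun r : ℝ => (r : ℂ)) h1
    push_cast at this; exact this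
  have hy2 : ((y₂ : ℂ))^2 = 1/3 := by
    have := congrArg (fun r : ℝ => (r : ℂ)) h2
    push_cast at this; exact this
  -- the key factorization
  have h2fac : (2 : ℂ[X]) * ((X - C a) * (X - C b)) = 2*X^2 + 2*X - 1 := by
    linear_combination (-2*X) * h1r + h2r
  have hE : EPoly y₁ y₂ = C ((1:ℂ)/3) * (2*X^2 + 2*X - 1)^3 := by
    rw [EPoly, hy1, hy2]
    linear_combination (-(X^2+4*X+1)*(X^2-2*X-2)*(2*X^2+2*X-1)) * h3u
  have hc : C ((1:ℂ)/3) * 8 = C ((8:ℂ)/3) := by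
    rw [show (8 : ℂ[X]) = C 8 from (map_ofNat C 8).symm, ← C_mul]; norm_num
  have hfact : EPoly y₁ y₂ = C ((8:ℂ)/3) * ((X - C a)^3 * (X - C b)^3) := by
    rw [hE, ← h2fac]
    linear_combination ((X - C a)^3 * (X - C b)^3) * hc
  refine ⟨?_, ?_, ?_, ?_⟩
  · intro t
    rw [EFun, h1, h2]; ring
  · ext z
    have h3 : (3:ℕ) ≠ 0 := by norm_num
    have h83 : ((8:ℂ)/3) ≠ 0 := by norm_num
    simp only [Set.mem_setOf_eq, Set.mem_insert_iff, Set.mem_singleton_iff, IsRoot, hfact,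
      eval_mul, eval_pow, eval_sub, eval_C, eval_X, mul_eq_zero, pow_eq_zero_iff h3,
      sub_eq_zero, C_eq_zero, h83, false_or]
  · rw [hfact]
    have hC : (C ((8:ℂ)/3) : ℂ[X]) ≠ 0 := by simp
    have hX1 : ((X - C a)^3 : ℂ[X]) ≠ 0 := pow_ne_zero _ (X_sub_C_ne_zero a)
    have hX2 : ((X - C b)^3 : ℂ[X]) ≠ 0 := pow_ne_zero _ (X_sub_C_ne_zero b)
    have hnb : ¬ ((X - C b)^3 : ℂ[X]).IsRoot a := by
      simp only [IsRoot, eval_pow, eval_sub, eval_C, eval_X, pow_eq_zero_iff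
        (show (3:ℕ) ≠ 0 by norm_num), sub_eq_zero]
      exact hne
    rw [rootMultiplicity_mul (mul_ne_zero hC (mul_ne_zero hX1 hX2)),
      rootMultiplicity_mul (mul_ne_zero hX1 hX2), rootMultiplicity_C,
      rootMultiplicity_X_sub_C_pow, rootMultiplicity_eq_zero hnb]
  · rw [hfact]
    have hC : (C ((8:ℂ)/3) : ℂ[X]) ≠ 0 := by simp
    have hX1 : ((X - C a)^3 : ℂ[X]) ≠ 0 := pow_ne_zero _ (X_sub_C_ne_zero a)
    have hX2 : ((X - C b)^3 : ℂ[X]) ≠ 0 := pow_ne_zero _ (X_sub_C_ne_zero b)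
    have hna : ¬ ((X - C a)^3 : ℂ[X]).IsRoot b := by
      simp only [IsRoot, eval_pow, eval_sub, eval_C, eval_X, pow_eq_zero_iff
        (show (3:ℕ) ≠ 0 by norm_num), sub_eq_zero]
      exact hne.symm
    rw [rootMultiplicity_mul (mul_ne_zero hC (mul_ne_zero hX1 hX2)),
      rootMultiplicity_mul (mul_ne_zero hX1 hX2), rootMultiplicity_C,
      rootMultiplicity_eq_zero hna, rootMultiplicity_X_sub_C_pow]
end

section
/- Let y₁ = y₂ = 1/2. Then for every t ∈ ℝ, 4·E(t) = 10t⁶ + 30t⁵ − 3t⁴ − 56t³ − 21t² + 12t + 1, and the polynomial 10t⁶ + 30t⁵ − 3t⁴ − 56t³ − 21t² + 12t + 1 has exactly six distinct real roots (equivalently, all six of its complex roots are real and simple). -/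
/-- The sextic as a real function. -/
noncomputable def sx (t : ℝ) : ℝ :=
  10*t^6 + 30*t^5 - 3*t^4 - 56*t^3 - 21*t^2 + 12*t + 1

lemma sx_cont : ContinuousOn sx (Set.univ) := by
  apply Continuous.continuousOn
  unfold sx
  continuity

/-- The sextic as a complex polynomial. -/
noncomputable def P : Polynomial ℂ :=
  Polynomial.C 10 * Polynomial.X^6 + Polynomial.C 30 * Polynomial.X^5
  - Polynomial.C 3 * Polynomial.X^4 - Polynomial.C 56 * Polynomial.X^3
  - Polynomial.C 21 * Polynomial.X^2 + Polynomial.C 12 * Polynomial.X + Polynomial.C 1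

lemma P_eval (z : ℂ) :
    P.eval z = 10*z^6 + 30*z^5 - 3*z^4 - 56*z^3 - 21*z^2 + 12*z + 1 := by
  simp [P]

lemma P_natDegree : P.natDegree = 6 := by
  unfold P
  compute_degree!

lemma P_ne_zero : P ≠ 0 := by
  intro h
  have := P_natDegree
  rw [h] at this
  simp at this

/-- get a root in an open interval from a sign change (increasing) -/
lemma root_of_sign_change {a b : ℝ} (hab : a ≤ b) (ha : sx a < 0) (hb : 0 < sx b) :
    ∃ r ∈ Set.Ioo a b, sx r = 0 := by
  have h := intermediate_value_Ioo hab (sx_cont.mono (Set.subset_univ _))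
  have : (0:ℝ) ∈ Set.Ioo (sx a) (sx b) := ⟨ha, hb⟩
  obtain ⟨r, hr, hr0⟩ := h this
  exact ⟨r, hr, hr0⟩

lemma root_of_sign_change' {a b : ℝ} (hab : a ≤ b) (ha : 0 < sx a) (hb : sx b < 0) :
    ∃ r ∈ Set.Ioo a b, sx r = 0 := by
  have h := intermediate_value_Ioo' hab (sx_cont.mono (Set.subset_univ _))
  have : (0:ℝ) ∈ Set.Ioo (sx b) (sx a) := ⟨hb, ha⟩
  obtain ⟨r, hr, hr0⟩ := h this
  exact ⟨r, hr, hr0⟩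

/-- If `y₁ = y₂ = 1/2` then `4·E(t) = 10t⁶+30t⁵−3t⁴−56t³−21t²+12t+1`,
and this sextic has exactly six distinct complex roots, all of which are real
(hence six distinct real roots, all simple). -/
theorem stmt_8 (y₁ y₂ : ℝ) (h1 : y₁ = 1/2) (h2 : y₂ = 1/2) :
    (∀ t : ℝ, 4 * EFun y₁ y₂ t
      = 10*t^6 + 30*t^5 - 3*t^4 - 56*t^3 - 21*t^2 + 12*t + 1) ∧
    ({z : ℂ | 10*z^6 + 30*z^5 - 3*z^4 - 56*z^3 - 21*z^2 + 12*z + 1 = 0}).ncard = 6 ∧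
    (∀ z : ℂ, 10*z^6 + 30*z^5 - 3*z^4 - 56*z^3 - 21*z^2 + 12*z + 1 = 0 →
      ∃ r : ℝ, z = (r : ℂ)) := by
  subst h1 h2
  -- sign evaluations
  have e1 : sx (-3) > 0 := by unfold sx; norm_num
  have e2 : sx (-2) < 0 := by unfold sx; norm_num
  have e3 : sx (-1) > 0 := by unfold sx; norm_num
  have e4 : sx (-1/2) < 0 := by unfold sx; norm_num
  have e5 : sx 0 > 0 := by unfold sx; norm_num
  have e6 : sx (1/2) < 0 := by unfold sx; norm_num
  have e7 : sx (3/2) > 0 := by unfold sx; norm_num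
  obtain ⟨r1, hr1, hz1⟩ := root_of_sign_change' (by norm_num : (-3:ℝ) ≤ -2) e1 e2
  obtain ⟨r2, hr2, hz2⟩ := root_of_sign_change (by norm_num : (-2:ℝ) ≤ -1) e2 e3
  obtain ⟨r3, hr3, hz3⟩ := root_of_sign_change' (by norm_num : (-1:ℝ) ≤ -1/2) e3 e4
  obtain ⟨r4, hr4, hz4⟩ := root_of_sign_change (by norm_num : (-1/2:ℝ) ≤ 0) e4 e5
  obtain ⟨r5, hr5, hz5⟩ := root_of_sign_change' (by norm_num : (0:ℝ) ≤ 1/2) e5 e6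
  obtain ⟨r6, hr6, hz6⟩ := root_of_sign_change (by norm_num : (1/2:ℝ) ≤ 3/2) e6 e7
  -- ordering
  have ord : r1 < r2 ∧ r2 < r3 ∧ r3 < r4 ∧ r4 < r5 ∧ r5 < r6 := by
    obtain ⟨a1, b1⟩ := hr1; obtain ⟨a2, b2⟩ := hr2; obtain ⟨a3, b3⟩ := hr3
    obtain ⟨a4, b4⟩ := hr4; obtain ⟨a5, b5⟩ := hr5; obtain ⟨a6, b6⟩ := hr6
    refine ⟨by linarith, by linarith, by linarith, by linarith, by linarith⟩
  -- the six complex roots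
  set S : Set ℂ := {z : ℂ | 10*z^6 + 30*z^5 - 3*z^4 - 56*z^3 - 21*z^2 + 12*z + 1 = 0}
    with hS
  have hmem : ∀ r : ℝ, sx r = 0 → ((r:ℂ) ∈ S) := by
    intro r hr
    have : ((10*r^6 + 30*r^5 - 3*r^4 - 56*r^3 - 21*r^2 + 12*r + 1 : ℝ) : ℂ) = 0 := by
      rw [show (10*r^6 + 30*r^5 - 3*r^4 - 56*r^3 - 21*r^2 + 12*r + 1 : ℝ) = sx r from rfl,
        hr]; simp
    simp only [hS, Set.mem_setOf_eq]
    push_cast at this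
    linear_combination this
  -- S equals the zero set of P
  have hSP : S = {z : ℂ | P.eval z = 0} := by
    ext z; simp [P_eval, hS]
  -- S ⊆ roots
  have hSsub : S ⊆ ↑P.roots.toFinset := by
    intro z hz
    rw [hSP] at hz
    simp only [Finset.mem_coe, Multiset.mem_toFinset]
    exact Polynomial.mem_roots'.mpr ⟨P_ne_zero, hz⟩
  obtain ⟨o1, o2, o3, o4, o5⟩ := ord
  have d12 : (r1:ℂ) ≠ r2 := by exact_mod_cast ne_of_lt o1
  have d13 : (r1:ℂ) ≠ r3 := by exact_mod_cast ne_of_lt (o1.trans o2)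
  have d14 : (r1:ℂ) ≠ r4 := by exact_mod_cast ne_of_lt ((o1.trans o2).trans o3)
  have d15 : (r1:ℂ) ≠ r5 := by exact_mod_cast ne_of_lt (((o1.trans o2).trans o3).trans o4)
  have d16 : (r1:ℂ) ≠ r6 := by
    exact_mod_cast ne_of_lt ((((o1.trans o2).trans o3).trans o4).trans o5)
  have d23 : (r2:ℂ) ≠ r3 := by exact_mod_cast ne_of_lt o2
  have d24 : (r2:ℂ) ≠ r4 := by exact_mod_cast ne_of_lt (o2.trans o3)
  have d25 : (r2:ℂ) ≠ r5 := by exact_mod_cast ne_of_lt ((o2.trans o3).trans o4)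
  have d26 : (r2:ℂ) ≠ r6 := by exact_mod_cast ne_of_lt (((o2.trans o3).trans o4).trans o5)
  have d34 : (r3:ℂ) ≠ r4 := by exact_mod_cast ne_of_lt o3
  have d35 : (r3:ℂ) ≠ r5 := by exact_mod_cast ne_of_lt (o3.trans o4)
  have d36 : (r3:ℂ) ≠ r6 := by exact_mod_cast ne_of_lt ((o3.trans o4).trans o5)
  have d45 : (r4:ℂ) ≠ r5 := by exact_mod_cast ne_of_lt o4
  have d46 : (r4:ℂ) ≠ r6 := by exact_mod_cast ne_of_lt (o4.trans o5)
  have d56 : (r5:ℂ) ≠ r6 := by exact_mod_cast ne_of_lt o5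
  set T : Finset ℂ := {(r1:ℂ), (r2:ℂ), (r3:ℂ), (r4:ℂ), (r5:ℂ), (r6:ℂ)} with hT
  have hTcard : T.card = 6 := by
    rw [hT]
    rw [Finset.card_insert_of_notMem (by simp [d12, d13, d14, d15, d16]),
      Finset.card_insert_of_notMem (by simp [d23, d24, d25, d26]),
      Finset.card_insert_of_notMem (by simp [d34, d35, d36]),
      Finset.card_insert_of_notMem (by simp [d45, d46]),
      Finset.card_insert_of_notMem (by simp [d56]),
      Finset.card_singleton]
  have hTS : (↑T : Set ℂ) ⊆ S := by
    intro z hz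
    simp only [hT, Finset.coe_insert, Set.mem_insert_iff, Finset.coe_singleton,
      Set.mem_singleton_iff] at hz
    rcases hz with h | h | h | h | h | h <;> subst h
    · exact hmem r1 hz1
    · exact hmem r2 hz2
    · exact hmem r3 hz3
    · exact hmem r4 hz4
    · exact hmem r5 hz5
    · exact hmem r6 hz6
  have hTsub : T ⊆ P.roots.toFinset := by
    intro z hz
    have : z ∈ S := hTS hz
    exact Multiset.mem_toFinset.mpr (Polynomial.mem_roots'.mpr ⟨P_ne_zero, by rwa [hSP] at this⟩)
  have hRcard : P.roots.toFinset.card ≤ 6 := by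
    calc P.roots.toFinset.card ≤ Multiset.card P.roots := Multiset.toFinset_card_le _
      _ ≤ P.natDegree := Polynomial.card_roots' P
      _ = 6 := P_natDegree
  have hTeq : T = P.roots.toFinset :=
    Finset.eq_of_subset_of_card_le hTsub (by rw [hTcard]; exact hRcard)
  have hSeq : S = ↑T := by
    apply Set.Subset.antisymm _ hTS
    intro z hz
    have := hSsub hz
    rwa [← hTeq] at this
  refine ⟨?_, ?_, ?_⟩
  · intro t
    unfold EFun
    ring
  · rw [hSeq, Set.ncard_coe_finset, hTcard]
  · intro z hz
    have : z ∈ (↑T : Set ℂ) := by rw [← hSeq]; exact hz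
    simp only [hT, Finset.coe_insert, Set.mem_insert_iff, Finset.coe_singleton,
      Set.mem_singleton_iff] at this
    rcases this with h | h | h | h | h | h
    · exact ⟨r1, h⟩
    · exact ⟨r2, h⟩
    · exact ⟨r3, h⟩
    · exact ⟨r4, h⟩
    · exact ⟨r5, h⟩
    · exact ⟨r6, h⟩
end

section
/- Let y₁² = y₂² = 3/8. Then for every t ∈ ℝ, 8·E(t) = (2t² + 2t − 1)(11t⁴ + 22t³ + 9t² − 2t + 5); the quartic 11t⁴ + 22t³ + 9t² − 2t + 5 has no real root; and consequently E has exactly two real roots, namely (−1+√3)/2 and (−1−√3)/2. -/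
/-- If `y₁² = y₂² = 3/8` then
`8·E(t) = (2t²+2t−1)(11t⁴+22t³+9t²−2t+5)`, the quartic factor has no real root,
and `E` has exactly the two real roots `(−1±√3)/2`. -/
theorem stmt_9 (y₁ y₂ : ℝ) (h1 : y₁^2 = 3/8) (h2 : y₂^2 = 3/8) :
    (∀ t : ℝ, 8 * EFun y₁ y₂ t
      = (2*t^2 + 2*t - 1) * (11*t^4 + 22*t^3 + 9*t^2 - 2*t + 5)) ∧
    (∀ t : ℝ, 11*t^4 + 22*t^3 + 9*t^2 - 2*t + 5 ≠ 0) ∧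
    {t : ℝ | EFun y₁ y₂ t = 0}
      = {(-1 + Real.sqrt 3) / 2, (-1 - Real.sqrt 3) / 2} := by
  have hfac : ∀ t : ℝ, 8 * EFun y₁ y₂ t
      = (2*t^2 + 2*t - 1) * (11*t^4 + 22*t^3 + 9*t^2 - 2*t + 5) := by
    intro t; simp only [EFun]; rw [h1, h2]; ring
  have hquart : ∀ t : ℝ, 11*t^4 + 22*t^3 + 9*t^2 - 2*t + 5 ≠ 0 := by
    intro t
    have : 0 < 11*t^4 + 22*t^3 + 9*t^2 - 2*t + 5 := by
      nlinarith [sq_nonneg (11*(t^2+t) - 1), sq_nonneg (t^2+t), sq_nonneg (2*t+1)]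
    linarith
  have hs : Real.sqrt 3 ^ 2 = 3 := Real.sq_sqrt (by norm_num)
  refine ⟨hfac, hquart, ?_⟩
  ext t
  simp only [Set.mem_setOf_eq, Set.mem_insert_iff, Set.mem_singleton_iff]
  constructor
  · intro h
    have h8 : (2*t^2 + 2*t - 1) * (11*t^4 + 22*t^3 + 9*t^2 - 2*t + 5) = 0 := by
      rw [← hfac t, h]; ring
    have hq : 2*t^2 + 2*t - 1 = 0 :=
      (mul_eq_zero.mp h8).resolve_right (hquart t)
    have hsplit : (2*t + 1 - Real.sqrt 3) * (2*t + 1 + Real.sqrt 3) = 0 := by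
      nlinarith [hs]
    rcases mul_eq_zero.mp hsplit with h' | h'
    · left; linarith
    · right; linarith
  · rintro (rfl | rfl) <;>
    · set s := Real.sqrt 3
      have hq : 2*((-1 + s) / 2)^2 + 2*((-1 + s) / 2) - 1 = 0 ∧
          2*((-1 - s) / 2)^2 + 2*((-1 - s) / 2) - 1 = 0 := by
        constructor <;> · field_simp; nlinarith [hs]
      first
      | (have h8 := hfac ((-1 + s)/2); rw [hq.1] at h8; linarith)
      | (have h8 := hfac ((-1 - s)/2); rw [hq.2] at h8; linarith)
end

section
/- For all real numbers y₁, y₂ and all t ∈ ℝ, D(t) = ((−2t − 1)/3)·E(t) + ((t² + t + 1)/9)·E′(t), where E′ is the derivative of E. Consequently, for every t ∈ ℝ, one has (E(t) = 0 and D(t) = 0) if and only if (E(t) = 0 and E′(t) = 0). -/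
/-- The polynomial `D(t)` as a real-valued function. -/
def DFun (y₁ y₂ t : ℝ) : ℝ :=
  y₁^2 * (1 - t^2) * (t^2 + 4*t + 1)^2 + y₂^2 * (2*t + t^2) * (t^2 - 2*t - 2)^2
    + 6*t^5 + 15*t^4 - 15*t^2 - 6*t

lemma EFun_deriv (y₁ y₂ t : ℝ) :
    deriv (EFun y₁ y₂) t
      = y₁^2 * (3*(t^2 + 4*t + 1)^2*(2*t + 4)) + y₂^2 * (3*(t^2 - 2*t - 2)^2*(2*t - 2))
        + 12*t^5 + 30*t^4 - 60*t^3 - 120*t^2 - 30*t + 6 := by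
  have h1 : HasDerivAt (fun t : ℝ => t^2 + 4*t + 1) (2*t + 4) t := by
    simpa using (((hasDerivAt_pow 2 t).add ((hasDerivAt_id t).const_mul 4)).add_const 1)
  have h2 : HasDerivAt (fun t : ℝ => t^2 - 2*t - 2) (2*t - 2) t := by
    simpa using (((hasDerivAt_pow 2 t).sub ((hasDerivAt_id t).const_mul 2)).sub_const 2)
  have h : HasDerivAt (EFun y₁ y₂)
      (y₁^2 * (3*(t^2 + 4*t + 1)^2*(2*t + 4)) + y₂^2 * (3*(t^2 - 2*t - 2)^2*(2*t - 2))
        + 12*t^5 + 30*t^4 - 60*t^3 - 120*t^2 - 30*t + 6) t := by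
    have hp1 := (h1.pow 3).const_mul (y₁^2)
    have hp2 := (h2.pow 3).const_mul (y₂^2)
    have hq :
        HasDerivAt (fun t : ℝ => 2*t^6 + 6*t^5 - 15*t^4 - 40*t^3 - 15*t^2 + 6*t + 2)
          (12*t^5 + 30*t^4 - 60*t^3 - 120*t^2 - 30*t + 6) t := by
      have := (((((((hasDerivAt_pow 6 t).const_mul 2).add
        ((hasDerivAt_pow 5 t).const_mul 6)).sub ((hasDerivAt_pow 4 t).const_mul 15)).sub
        ((hasDerivAt_pow 3 t).const_mul 40)).sub ((hasDerivAt_pow 2 t).const_mul 15)).add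
        ((hasDerivAt_id t).const_mul 6)).add_const 2
      exact this.congr_deriv (by norm_num; ring)
    have h := (hp1.add hp2).add hq
    have hfun : EFun y₁ y₂ = (fun x : ℝ =>
        y₁^2 * (x^2 + 4*x + 1)^3 + y₂^2 * (x^2 - 2*x - 2)^3
          + (2*x^6 + 6*x^5 - 15*x^4 - 40*x^3 - 15*x^2 + 6*x + 2)) := by
      funext x; unfold EFun; ring
    rw [hfun]
    exact h.congr_deriv (by norm_num; ring)
  exact h.deriv

/-- `D = ((−2t−1)/3)·E + ((t²+t+1)/9)·E′`, so `E = D = 0` iff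
`E = E′ = 0`. -/
theorem stmt_10 (y₁ y₂ : ℝ) :
    (∀ t : ℝ, DFun y₁ y₂ t
      = ((-2*t - 1) / 3) * EFun y₁ y₂ t
        + ((t^2 + t + 1) / 9) * deriv (EFun y₁ y₂) t) ∧
    (∀ t : ℝ, (EFun y₁ y₂ t = 0 ∧ DFun y₁ y₂ t = 0)
      ↔ (EFun y₁ y₂ t = 0 ∧ deriv (EFun y₁ y₂) t = 0)) := by
  have key : ∀ t : ℝ, DFun y₁ y₂ t
      = ((-2*t - 1) / 3) * EFun y₁ y₂ t
        + ((t^2 + t + 1) / 9) * deriv (EFun y₁ y₂) t := by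
    intro t
    rw [EFun_deriv]
    unfold DFun EFun
    ring
  refine ⟨key, fun t => ?_⟩
  have hpos : (0:ℝ) < t^2 + t + 1 := by nlinarith [sq_nonneg (t + 1/2)]
  constructor
  · rintro ⟨hE, hD⟩
    refine ⟨hE, ?_⟩
    have := key t
    rw [hE, hD] at this
    have h9 : ((t^2 + t + 1) / 9) ≠ 0 := by positivity
    field_simp at this
    have h3 : (3 * (t * (t + 1) + 1)) * deriv (EFun y₁ y₂) t = 0 := by linarith
    rcases mul_eq_zero.mp h3 with h | h
    · exact absurd h (by nlinarith : (0:ℝ) < 3 * (t * (t + 1) + 1)).ne'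
    · exact h
  · rintro ⟨hE, hE'⟩
    exact ⟨hE, by rw [key t, hE, hE']; ring⟩
end

section
/- For all real numbers y₁, y₂: (i) E(−1/2) = −(27/64)·(y₁² + y₂² + 2), which is strictly negative; and (ii) for every real t ≠ −1/2, (2t + 1)⁶ · E((t + 2)/(−2t − 1)) = −27 · E(t). In particular, the Möbius involution σ(t) = (t+2)/(−2t−1) maps the set of real roots of E to itself. -/
set_option maxHeartbeats 1000000


/-- `E(−1/2) = −(27/64)(y₁²+y₂²+2) < 0`; for `t ≠ −1/2`,
`(2t+1)⁶·E(σ(t)) = −27·E(t)` where `σ(t) = (t+2)/(−2t−1)`; in particular `σ`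
maps the set of real roots of `E` into itself. -/
theorem stmt_12 (y₁ y₂ : ℝ) :
    (EFun y₁ y₂ (-1/2) = -(27/64) * (y₁^2 + y₂^2 + 2)) ∧
    (EFun y₁ y₂ (-1/2) < 0) ∧
    (∀ t : ℝ, t ≠ -1/2 →
      (2*t + 1)^6 * EFun y₁ y₂ ((t + 2) / (-2*t - 1)) = -27 * EFun y₁ y₂ t) ∧
    (∀ t : ℝ, EFun y₁ y₂ t = 0 → EFun y₁ y₂ ((t + 2) / (-2*t - 1)) = 0) := by
  have hval : EFun y₁ y₂ (-1/2) = -(27/64) * (y₁^2 + y₂^2 + 2) := by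
    simp only [EFun]; ring
  have hneg : EFun y₁ y₂ (-1/2) < 0 := by
    rw [hval]; nlinarith [sq_nonneg y₁, sq_nonneg y₂]
  have hmain : ∀ t : ℝ, t ≠ -1/2 →
      (2*t + 1)^6 * EFun y₁ y₂ ((t + 2) / (-2*t - 1)) = -27 * EFun y₁ y₂ t := by
    intro t ht
    have h0 : (-2*t - 1 : ℝ) ≠ 0 := fun h => ht (by linarith)
    set s : ℝ := (t + 2) / (-2*t - 1) with hs
    have hsb : s * (-2*t - 1) = t + 2 := div_mul_cancel₀ _ h0
    have f1 : (2*t+1)^2 * (s^2 + 4*s + 1) = -3*(t^2 + 4*t + 1) := by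
      linear_combination (-(2*t+1)*s + (t + 2) - 4*(2*t+1)) * hsb
    have f2 : (2*t+1)^2 * (s^2 - 2*s - 2) = -3*(t^2 - 2*t - 2) := by
      linear_combination (-(2*t+1)*s + (t + 2) + 2*(2*t+1)) * hsb
    simp only [EFun]
    -- Write a = (2t+1)²(s²+4s+1), b = (2t+1)²(s²−2s−2), A = t²+4t+1, B = t²−2t−2.
    -- Then the goal is y₁²a³+y₂²b³+a²b+ab² = −27(y₁²A³+y₂²B³+A²B+AB²), since
    -- 2t⁶+6t⁵−15t⁴−40t³−15t²+6t+2 = A²B+AB².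
    linear_combination
      (y₁^2 * (((2*t+1)^2*(s^2+4*s+1))^2 - 3*(t^2+4*t+1)*((2*t+1)^2*(s^2+4*s+1))
          + 9*(t^2+4*t+1)^2)
        + ((2*t+1)^2*(s^2-2*s-2))^2
        - 3*(t^2-2*t-2)*((2*t+1)^2*(s^2+4*s+1) - 3*(t^2+4*t+1))) * f1
      + (y₂^2 * (((2*t+1)^2*(s^2-2*s-2))^2 - 3*(t^2-2*t-2)*((2*t+1)^2*(s^2-2*s-2))
          + 9*(t^2-2*t-2)^2)
        + ((2*t+1)^2*(s^2+4*s+1))^2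
        - 3*(t^2+4*t+1)*((2*t+1)^2*(s^2-2*s-2) - 3*(t^2-2*t-2))) * f2
  refine ⟨hval, hneg, hmain, ?_⟩
  intro t h
  have ht : t ≠ -1/2 := by
    intro h'; rw [h'] at h; rw [h] at hneg; exact lt_irrefl 0 hneg
  have key := hmain t ht
  rw [h] at key
  have h6 : ((2*t + 1)^6 : ℝ) ≠ 0 := pow_ne_zero _ (fun h' => ht (by linarith))
  rcases mul_eq_zero.mp (by linarith : 
      (2*t + 1)^6 * EFun y₁ y₂ ((t + 2) / (-2*t - 1)) = 0) with h' | h'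
  · exact absurd h' h6
  · exact h'
end

section
/- Let y₁, y₂ > 0 be real numbers satisfying 27·y₁⁴·y₂⁴ − 18·y₁²·y₂² + 4·y₁² + 4·y₂² = 1. Then y₁² ≤ 1/3 and y₂² ≤ 1/3; moreover, y₁² = 1/3 holds if and only if (y₁, y₂) = (1/√3, 1/√3), and likewise y₂² = 1/3 holds if and only if (y₁, y₂) = (1/√3, 1/√3). -/
lemma aux_le (a b : ℝ)
    (h : 27 * a^2 * b^2 - 18 * a * b + 4 * a + 4 * b = 1) : a ≤ 1/3 := by
  have key : (54 * a^2 * b + 4 - 18 * a)^2 = 16 * (1 - 3*a)^3 := by nlinarith [sq_nonneg a, sq_nonneg b]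
  by_contra h'
  push_neg at h'
  have hp : (0:ℝ) < (3*a - 1)^3 := pow_pos (by linarith) 3
  nlinarith [sq_nonneg (54 * a^2 * b + 4 - 18 * a)]

lemma aux_eq (a b : ℝ) (ha : a = 1/3)
    (h : 27 * a^2 * b^2 - 18 * a * b + 4 * a + 4 * b = 1) : b = 1/3 := by
  subst ha; nlinarith [sq_nonneg (b - 1/3)]

lemma sqrt_of_sq (y : ℝ) (hy : 0 < y) (h : y^2 = 1/3) : y = 1 / Real.sqrt 3 := by
  have : y = Real.sqrt (1/3) := by
    rw [← h, Real.sqrt_sq hy.le]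
  rw [this, show (1:ℝ)/3 = 3⁻¹ by norm_num, Real.sqrt_inv, one_div]

/-- the caustic curve `27y₁⁴y₂⁴ − 18y₁²y₂² + 4y₁² + 4y₂² = 1`
(with `y₁, y₂ > 0`) lies in the square `y₁², y₂² ≤ 1/3`, with equality in either
coordinate exactly at the cuspidal point `(1/√3, 1/√3)`. -/
theorem stmt_13 (y₁ y₂ : ℝ) (hy₁ : 0 < y₁) (hy₂ : 0 < y₂)
    (h : 27 * y₁^4 * y₂^4 - 18 * y₁^2 * y₂^2 + 4 * y₁^2 + 4 * y₂^2 = 1) :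
    y₁^2 ≤ 1/3 ∧ y₂^2 ≤ 1/3 ∧
    (y₁^2 = 1/3 ↔ ((y₁, y₂) : ℝ × ℝ) = (1 / Real.sqrt 3, 1 / Real.sqrt 3)) ∧
    (y₂^2 = 1/3 ↔ ((y₁, y₂) : ℝ × ℝ) = (1 / Real.sqrt 3, 1 / Real.sqrt 3)) := by
  have hab : 27 * (y₁^2)^2 * (y₂^2)^2 - 18 * (y₁^2) * (y₂^2) + 4 * y₁^2 + 4 * y₂^2 = 1 := by
    ring_nf; ring_nf at h; linarith
  have hba : 27 * (y₂^2)^2 * (y₁^2)^2 - 18 * (y₂^2) * (y₁^2) + 4 * y₂^2 + 4 * y₁^2 = 1 := by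
    linarith [hab]
  have h1 := aux_le _ _ hab
  have h2 := aux_le _ _ hba
  have hsq : (1 / Real.sqrt 3)^2 = 1/3 := by
    rw [div_pow, one_pow, Real.sq_sqrt (by norm_num : (3:ℝ) ≥ 0)]
  refine ⟨h1, h2, ⟨fun ha => ?_, fun he => ?_⟩, ⟨fun hb => ?_, fun he => ?_⟩⟩
  · have hb := aux_eq _ _ ha hab
    simp [Prod.ext_iff, sqrt_of_sq _ hy₁ ha, sqrt_of_sq _ hy₂ hb]
  · simp only [Prod.mk.injEq] at he; rw [he.1]; exact hsq
  · have ha := aux_eq _ _ hb hba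
    simp [Prod.ext_iff, sqrt_of_sq _ hy₁ ha, sqrt_of_sq _ hy₂ hb]
  · simp only [Prod.mk.injEq] at he; rw [he.2]; exact hsq
end
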